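/- arXiv:2008.03031 — 2 statements merged into one kernel-verified Lean document; each statement's English description precedes it below -/
import Mathlib

section
/- Every subdivision of a wheel with an r-explicit generating set is an r-local subdivision of a wheel; that is, if either all pieces of the subdivision have length at most r, or all pieces except one have length at most r and the rim has length at most r, then the cycles of length at most r generate all cycles of the subdivision. -/
/-!
Common definitions: weighted graphs, weighted lengths of walks, 𝔽₂-generation of cycles,
subdivisions of wheels (with pieces and rim), theta graphs, the classes 𝒲 and 𝒲*,
fans and pre-fans, arcs/bridges/detours of a cycle relative to a theta graph.
-/

open SimpleGraph

namespace LocalWheels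

variable {V : Type*} [Fintype V] [DecidableEq V]

/-- The weighted length of a walk: the sum of the weights of its edges. -/
def wlen {G : SimpleGraph V} (wt : Sym2 V → ℕ) {u v : V} (p : G.Walk u v) : ℕ :=
  (p.edges.map wt).sum

/-- All edges of `G` have positive weight. -/
def WeightPos (G : SimpleGraph V) (wt : Sym2 V → ℕ) : Prop :=
  ∀ e ∈ G.edgeSet, 0 < wt e

/-- `t` is the 𝔽₂-sum (iterated symmetric difference) of finitely many members of `𝒞`. -/
def IsF2Sum (𝒞 : Set (Finset (Sym2 V))) (t : Finset (Sym2 V)) : Prop :=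
  ∃ l : List (Finset (Sym2 V)), (∀ s ∈ l, s ∈ 𝒞) ∧ l.foldr symmDiff ∅ = t

/-- The edge sets of the cycles of the subgraph with edge set `E` having weighted length
at most `r`. -/
def shortCycleEdgeSets (G : SimpleGraph V) (wt : Sym2 V → ℕ) (r : ℕ∞) (E : Set (Sym2 V)) :
    Set (Finset (Sym2 V)) :=
  {t | ∃ (v : V) (c : G.Walk v v), c.IsCycle ∧ (∀ e ∈ c.edges, e ∈ E) ∧
        (wlen wt c : ℕ∞) ≤ r ∧ c.edges.toFinset = t}

/-- Every cycle of the subgraph with edge set `E` is generated (over 𝔽₂) by the cycles of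
that subgraph of weighted length at most `r`. -/
def LocallyGenerated (G : SimpleGraph V) (wt : Sym2 V → ℕ) (r : ℕ∞) (E : Set (Sym2 V)) : Prop :=
  ∀ (v : V) (c : G.Walk v v), c.IsCycle → (∀ e ∈ c.edges, e ∈ E) →
    IsF2Sum (shortCycleEdgeSets G wt r E) c.edges.toFinset

/-- A subdivision of a wheel inside the graph `G`: a center, `n ≥ 3` branch vertices on the
rim, internally disjoint spoke paths from the center to the branch vertices and internally
disjoint rim arcs joining consecutive branch vertices. -/
structure WheelSubdiv (G : SimpleGraph V) where
  n : ℕ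
  hn : 3 ≤ n
  center : V
  branch : Fin n → V
  branch_inj : Function.Injective branch
  center_ne : ∀ i, center ≠ branch i
  spoke : (i : Fin n) → G.Walk center (branch i)
  arc : (i : Fin n) → G.Walk (branch i) (branch (finRotate n i))
  spoke_path : ∀ i, (spoke i).IsPath
  arc_path : ∀ i, (arc i).IsPath
  spoke_spoke : ∀ i j, i ≠ j →
    {x | x ∈ (spoke i).support} ∩ {x | x ∈ (spoke j).support} = {center}
  arc_arc : ∀ i j, i ≠ j →
    {x | x ∈ (arc i).support} ∩ {x | x ∈ (arc j).support} =
      ({branch i, branch (finRotate n i)} ∩ {branch j, branch (finRotate n j)} : Set V)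
  spoke_arc : ∀ i j,
    {x | x ∈ (spoke i).support} ∩ {x | x ∈ (arc j).support} =
      ({center, branch i} ∩ {branch j, branch (finRotate n j)} : Set V)

namespace WheelSubdiv

variable {G : SimpleGraph V}

/-- The vertices of the subdivision of the wheel. -/
def support (W : WheelSubdiv G) : Set V :=
  {x | ∃ i, x ∈ (W.spoke i).support ∨ x ∈ (W.arc i).support}

/-- The edges of the subdivision of the wheel. -/
def edges (W : WheelSubdiv G) : Set (Sym2 V) :=
  {e | ∃ i, e ∈ (W.spoke i).edges ∨ e ∈ (W.arc i).edges}

/-- The `i`-th piece of the subdivision of the wheel: the cycle through the center obtained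
from the `i`-th spoke, the `i`-th rim arc and the `(i+1)`-st spoke. -/
def piece (W : WheelSubdiv G) (i : Fin W.n) : G.Walk W.center W.center :=
  (W.spoke i).append ((W.arc i).append (W.spoke (finRotate W.n i)).reverse)

/-- The weighted length of the `i`-th piece. -/
def pieceLen (W : WheelSubdiv G) (wt : Sym2 V → ℕ) (i : Fin W.n) : ℕ :=
  wlen wt (W.piece i)

/-- The weighted length of the rim. -/
def rimLen (W : WheelSubdiv G) (wt : Sym2 V → ℕ) : ℕ :=
  ∑ i, wlen wt (W.arc i)

/-- The subdivision of the wheel is `r`-bounded: all pieces have length at most `r`. -/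
def RBounded (W : WheelSubdiv G) (wt : Sym2 V → ℕ) (r : ℕ∞) : Prop :=
  ∀ i, (W.pieceLen wt i : ℕ∞) ≤ r

/-- The subdivision of the wheel has an `r`-explicit generating set: all pieces have
length at most `r`, or all pieces except one have length at most `r` and the rim has
length at most `r`. -/
def RExplicit (W : WheelSubdiv G) (wt : Sym2 V → ℕ) (r : ℕ∞) : Prop :=
  (∀ i, (W.pieceLen wt i : ℕ∞) ≤ r) ∨
    ((∃ i₀, ∀ i, i ≠ i₀ → (W.pieceLen wt i : ℕ∞) ≤ r) ∧ (W.rimLen wt : ℕ∞) ≤ r)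

/-- The subdivision of the wheel is `r`-local: its cycles of length at most `r` generate
all its cycles. -/
def RLocal (W : WheelSubdiv G) (wt : Sym2 V → ℕ) (r : ℕ∞) : Prop :=
  LocallyGenerated G wt r W.edges

end WheelSubdiv

/-- A theta graph of parameter `r` inside `G`: two branching vertices joined by three
internally disjoint paths (its arms) such that at least two of the three cycles formed by
unions of pairs of arms have weighted length at most `r`. -/
structure Theta (G : SimpleGraph V) (wt : Sym2 V → ℕ) (r : ℕ∞) where
  v : V
  w : V
  hvw : v ≠ w
  arm : Fin 3 → G.Walk v w
  arm_path : ∀ i, (arm i).IsPath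
  arm_inter : ∀ i j, i ≠ j →
    {x | x ∈ (arm i).support} ∩ {x | x ∈ (arm j).support} = {v, w}
  arm_ne : ∀ i j, i ≠ j → (arm i).edges ≠ (arm j).edges
  param : ∃ i j k : Fin 3, i ≠ j ∧ i ≠ k ∧ j ≠ k ∧
    ((wlen wt (arm i) + wlen wt (arm j) : ℕ) : ℕ∞) ≤ r ∧
    ((wlen wt (arm i) + wlen wt (arm k) : ℕ) : ℕ∞) ≤ r

namespace Theta

variable {G : SimpleGraph V} {wt : Sym2 V → ℕ} {r : ℕ∞}

/-- The vertices of the theta graph. -/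
def support (θ : Theta G wt r) : Set V := {x | ∃ i, x ∈ (θ.arm i).support}

/-- The edges of the theta graph. -/
def edges (θ : Theta G wt r) : Set (Sym2 V) := {e | ∃ i, e ∈ (θ.arm i).edges}

/-- `x` is an interior vertex of the `i`-th arm. -/
def interior (θ : Theta G wt r) (i : Fin 3) (x : V) : Prop :=
  x ∈ (θ.arm i).support ∧ x ≠ θ.v ∧ x ≠ θ.w

/-- `x` is a branching vertex of the theta graph. -/
def IsBranch (θ : Theta G wt r) (x : V) : Prop := x = θ.v ∨ x = θ.w

end Theta

/-- `p` lies strictly between `x` and `y` on the path `A`. -/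
def StrictlyBetween {G : SimpleGraph V} {u₀ w₀ : V} (A : G.Walk u₀ w₀) (p x y : V)
    (hp : p ∈ A.support) : Prop :=
  p ≠ x ∧ p ≠ y ∧
    ((x ∈ (A.takeUntil p hp).support ∧ y ∈ (A.dropUntil p hp).support) ∨
     (y ∈ (A.takeUntil p hp).support ∧ x ∈ (A.dropUntil p hp).support))

/-- The subgraph of `G` with vertex set `S` and edge set `E` belongs to the class `𝒲`:
it is obtained from a theta graph of parameter `r` by attaching a path `P` at interior
vertices of two different arms, in such a way that it contains a cycle of length at most
`r` including `P`. -/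
def InW (G : SimpleGraph V) (wt : Sym2 V → ℕ) (r : ℕ∞) (S : Set V) (E : Set (Sym2 V)) :
    Prop :=
  ∃ (θ : Theta G wt r) (i j : Fin 3) (p₁ p₂ : V) (P : G.Walk p₁ p₂),
    i ≠ j ∧ θ.interior i p₁ ∧ θ.interior j p₂ ∧ P.IsPath ∧
    {x | x ∈ P.support} ∩ θ.support = {p₁, p₂} ∧
    S = θ.support ∪ {x | x ∈ P.support} ∧
    E = θ.edges ∪ {e | e ∈ P.edges} ∧
    ∃ (u : V) (c : G.Walk u u), c.IsCycle ∧ (∀ e ∈ c.edges, e ∈ E) ∧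
      ((wlen wt c : ℕ) : ℕ∞) ≤ r ∧ ∀ e ∈ P.edges, e ∈ c.edges

/-- The subgraph of `G` with vertex set `S` and edge set `E` belongs to the class `𝒲*`:
it is obtained from a theta graph of parameter `r` by attaching a path `P` at interior
vertices of two different arms and a path `Q` at a branching vertex and an interior vertex
of an arm that also contains an endvertex of `P`, that endvertex of `P` lying strictly
between the two endvertices of `Q` on that arm, in such a way that it contains a cycle of
length at most `r` including both `P` and `Q`. -/
def InWStar (G : SimpleGraph V) (wt : Sym2 V → ℕ) (r : ℕ∞) (S : Set V) (E : Set (Sym2 V)) :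
    Prop :=
  ∃ (θ : Theta G wt r) (i j : Fin 3) (p₁ p₂ : V) (P : G.Walk p₁ p₂),
    i ≠ j ∧ θ.interior i p₁ ∧ θ.interior j p₂ ∧ P.IsPath ∧
    {x | x ∈ P.support} ∩ θ.support = {p₁, p₂} ∧
    ∃ (b q : V) (k : Fin 3) (Q : G.Walk b q),
      θ.IsBranch b ∧ θ.interior k q ∧ Q.IsPath ∧
      {x | x ∈ Q.support} ∩ (θ.support ∪ {x | x ∈ P.support}) = {b, q} ∧
      (∃ (p : V) (hp : p ∈ (θ.arm k).support), (p = p₁ ∨ p = p₂) ∧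
        StrictlyBetween (θ.arm k) p b q hp) ∧
      S = θ.support ∪ {x | x ∈ P.support} ∪ {x | x ∈ Q.support} ∧
      E = θ.edges ∪ {e | e ∈ P.edges} ∪ {e | e ∈ Q.edges} ∧
      ∃ (u : V) (c : G.Walk u u), c.IsCycle ∧ (∀ e ∈ c.edges, e ∈ E) ∧
        ((wlen wt c : ℕ) : ℕ∞) ≤ r ∧ (∀ e ∈ P.edges, e ∈ c.edges) ∧
        ∀ e ∈ Q.edges, e ∈ c.edges

/-- `Q` is a subpath of the cycle `o`: a path all of whose edges are edges of `o`. -/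
def IsSubpathOf {G : SimpleGraph V} {a b u : V} (Q : G.Walk a b) (o : G.Walk u u) : Prop :=
  Q.IsPath ∧ ∀ e ∈ Q.edges, e ∈ o.edges

namespace Theta

variable {G : SimpleGraph V} {wt : Sym2 V → ℕ} {r : ℕ∞}

/-- `Q` is an arc of the cycle `o` relative to the theta graph `θ`: a nontrivial subpath
of `o` meeting `θ` exactly in its two endvertices. -/
def IsArc (θ : Theta G wt r) {u a b : V} (o : G.Walk u u) (Q : G.Walk a b) : Prop :=
  IsSubpathOf Q o ∧ 0 < Q.length ∧ a ∈ θ.support ∧ b ∈ θ.support ∧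
    ∀ x ∈ Q.support, x ≠ a → x ≠ b → x ∉ θ.support

/-- `Q` is a `θ`-bridge of `o`: an arc whose endvertices are interior vertices of two
different arms of `θ`. -/
def IsBridgeArc (θ : Theta G wt r) {u a b : V} (o : G.Walk u u) (Q : G.Walk a b) : Prop :=
  θ.IsArc o Q ∧ ∃ i j : Fin 3, i ≠ j ∧ θ.interior i a ∧ θ.interior j b

/-- `Q` is a `θ`-detour of `o`: an arc that is not a bridge. -/
def IsDetourArc (θ : Theta G wt r) {u a b : V} (o : G.Walk u u) (Q : G.Walk a b) : Prop :=
  θ.IsArc o Q ∧ ¬ ∃ i j : Fin 3, i ≠ j ∧ θ.interior i a ∧ θ.interior j b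

/-- The arc `R` is strongly adjacent to the arc `S`: some subpath `X` of `o` joins an
endvertex of `R` to an endvertex of `S`, contains no internal vertex of any arc, and the
endvertex of `R` on `X` is not a branching vertex of `θ`. -/
def StronglyAdj (θ : Theta G wt r) {u r₁ r₂ s₁ s₂ : V} (o : G.Walk u u)
    (R : G.Walk r₁ r₂) (S : G.Walk s₁ s₂) : Prop :=
  ∃ (x y : V) (X : G.Walk x y), (x = r₁ ∨ x = r₂) ∧ (y = s₁ ∨ y = s₂) ∧
    IsSubpathOf X o ∧
    (∀ z ∈ X.support, ∀ (a b : V) (Q : G.Walk a b), θ.IsArc o Q → z ∈ Q.support →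
      z = a ∨ z = b) ∧
    ¬ θ.IsBranch x ∧ R.length = R.length ∧ S.length = S.length

/-- The bridge `Q` is primary (relative to the branching vertex `vb` on `o`): it has an
endvertex `x` such that a shortest path from `x` to `vb` within the cycle `o` includes `Q`. -/
def PrimaryBridge (θ : Theta G wt r) {u a b : V} (o : G.Walk u u) (vb : V)
    (Q : G.Walk a b) : Prop :=
  ∃ x : V, (x = a ∨ x = b) ∧ ∃ S : G.Walk x vb, IsSubpathOf S o ∧
    (∀ S' : G.Walk x vb, IsSubpathOf S' o → wlen wt S ≤ wlen wt S') ∧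
    ∀ e ∈ Q.edges, e ∈ S.edges

end Theta

/-- Common data of fans and pre-fans of parameter `r` centered at `v`: a nonempty sequence
of (oriented) cycles through `v`, each of weighted length at most `r`. -/
structure FanSeq (G : SimpleGraph V) (wt : Sym2 V → ℕ) (r : ℕ∞) (v : V) where
  n : ℕ
  hn : 0 < n
  piece : Fin n → G.Walk v v
  piece_cycle : ∀ i, (piece i).IsCycle
  piece_len : ∀ i, (wlen wt (piece i) : ℕ∞) ≤ r

namespace FanSeq

variable {G : SimpleGraph V} {wt : Sym2 V → ℕ} {r : ℕ∞} {v : V}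

/-- The index of the first piece. -/
def first (F : FanSeq G wt r v) : Fin F.n := ⟨0, F.hn⟩

/-- The index of the last piece. -/
def last (F : FanSeq G wt r v) : Fin F.n := ⟨F.n - 1, Nat.sub_lt F.hn Nat.one_pos⟩

/-- The start of the pre-fan: the edge of the first cycle immediately before `v`. -/
def preStart (F : FanSeq G wt r v) : Sym2 V :=
  s((F.piece F.first).reverse.getVert 1, v)

/-- The end of the pre-fan: the edge of the last cycle immediately after `v`. -/
def preEnd (F : FanSeq G wt r v) : Sym2 V :=
  s(v, (F.piece F.last).getVert 1)

/-- The start of the fan: the first edge of the first cycle. -/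
def fanStart (F : FanSeq G wt r v) : Sym2 V :=
  s(v, (F.piece F.first).getVert 1)

/-- The end of the fan: the last edge of the last cycle. -/
def fanEnd (F : FanSeq G wt r v) : Sym2 V :=
  s((F.piece F.last).reverse.getVert 1, v)

/-- The edges of (the union of the pieces of) the fan. -/
def edges (F : FanSeq G wt r v) : Set (Sym2 V) := {e | ∃ i, e ∈ (F.piece i).edges}

/-- The pre-fan condition: the vertex just after `v` on a piece equals the vertex just
before `v` on the next piece. -/
def IsPreFan (F : FanSeq G wt r v) : Prop :=
  ∀ (i : ℕ) (h : i + 1 < F.n),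
    (F.piece ⟨i, Nat.lt_of_succ_lt h⟩).getVert 1 =
      (F.piece ⟨i + 1, h⟩).reverse.getVert 1

/-- The fan condition: pieces at distance at least two meet exactly in `v`, and each piece
has the form `v Lᵢ Mᵢ Rᵢ v` where `Rᵢ = L_{i+1}` is exactly the intersection of consecutive
pieces. -/
def IsFan (F : FanSeq G wt r v) : Prop :=
  (∀ i j : Fin F.n, 2 ≤ |((i : ℕ) : ℤ) - ((j : ℕ) : ℤ)| →
      {x | x ∈ (F.piece i).support} ∩ {x | x ∈ (F.piece j).support} = {v}) ∧
  ∀ (i : ℕ) (h : i + 1 < F.n),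
    ∃ (x : V) (hx : x ∈ (F.piece ⟨i, Nat.lt_of_succ_lt h⟩).support)
      (hx' : x ∈ (F.piece ⟨i + 1, h⟩).support),
      (F.piece ⟨i, Nat.lt_of_succ_lt h⟩).dropUntil x hx =
        ((F.piece ⟨i + 1, h⟩).takeUntil x hx').reverse ∧
      {y | y ∈ (F.piece ⟨i, Nat.lt_of_succ_lt h⟩).support} ∩
          {y | y ∈ (F.piece ⟨i + 1, h⟩).support} =
        {y | y ∈ ((F.piece ⟨i, Nat.lt_of_succ_lt h⟩).dropUntil x hx).support}

end FanSeq

end LocalWheels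

namespace LocalWheels

set_option linter.unusedSectionVars false

variable {V : Type*} [Fintype V] [DecidableEq V] {G : SimpleGraph V}

/-- membership in an iterated symmetric difference -/
lemma mem_foldr_symmDiff (e : Sym2 V) :
    ∀ (l : List (Finset (Sym2 V))),
      (e ∈ l.foldr symmDiff ∅ ↔ Odd (l.countP (fun s => e ∈ s))) := by
  intro l
  induction l with
  | nil => simp
  | cons s l ih =>
    simp only [List.foldr_cons, Finset.mem_symmDiff, List.countP_cons]
    by_cases hs : e ∈ s <;>
      simp [hs, ih, Nat.odd_add, Nat.even_add_one, ← Nat.not_even_iff_odd]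

lemma countP_toList {ι : Type*} [DecidableEq ι] (s : Finset ι) (p : ι → Prop)
    [DecidablePred p] :
    s.toList.countP (fun i => p i) = (s.filter p).card := by
  have : s.toList.countP (fun i => p i) = Multiset.countP p (s.toList : Multiset ι) :=
    (Multiset.coe_countP _ _).symm
  rw [this]
  have h2 : (s.toList : Multiset ι) = s.val := s.val.coe_toList
  rw [h2, Finset.filter, Finset.card]
  exact Multiset.countP_eq_card_filter _ _

/-- a path from a loop is nil -/
lemma IsPath.loop_eq_nil {v : V} {p : G.Walk v v} (hp : p.IsPath) : p = Walk.nil := by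
  cases p with
  | nil => rfl
  | cons h q =>
    exfalso
    have := hp.support_nodup
    rw [Walk.support_cons] at this
    exact (List.nodup_cons.mp this).1 q.end_mem_support

/-- any member of an edge of a walk is in the support -/
lemma mem_support_of_mem_edges {u v x : V} {p : G.Walk u v} {e : Sym2 V}
    (he : e ∈ p.edges) (hx : x ∈ e) : x ∈ p.support := by
  induction e with
  | _ a b =>
    rcases Sym2.mem_iff.mp hx with rfl | rfl
    · exact p.fst_mem_support_of_mem_edges he
    · exact p.snd_mem_support_of_mem_edges he

/-- the unique edge of a path at its first vertex -/
lemma exists_unique_start_edge {u v : V} {p : G.Walk u v} (hp : p.IsPath)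
    (hnil : ¬ p.Nil) :
    ∃ e₀ ∈ p.edges, u ∈ e₀ ∧ ∀ e ∈ p.edges, u ∈ e → e = e₀ := by
  cases p with
  | nil => exact absurd Walk.Nil.nil hnil
  | cons h q =>
    rename_i z
    refine ⟨s(u, z), by simp, by simp, ?_⟩
    intro e he hu
    rw [Walk.edges_cons, List.mem_cons] at he
    rcases he with rfl | he
    · rfl
    · exfalso
      have : _ ∈ q.support := mem_support_of_mem_edges he hu
      have h2 := hp.support_nodup
      rw [Walk.support_cons] at h2
      exact (List.nodup_cons.mp h2).1 this

/-- the unique edge of a path at its last vertex -/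
lemma exists_unique_end_edge {u v : V} {p : G.Walk u v} (hp : p.IsPath)
    (hnil : ¬ p.Nil) :
    ∃ e₀ ∈ p.edges, v ∈ e₀ ∧ ∀ e ∈ p.edges, v ∈ e → e = e₀ := by
  obtain ⟨e₀, h1, h2, h3⟩ := exists_unique_start_edge hp.reverse (by
    rw [Walk.not_nil_iff_lt_length, Walk.length_reverse]
    rwa [Walk.not_nil_iff_lt_length] at hnil)
  rw [Walk.edges_reverse] at h1 h3
  exact ⟨e₀, List.mem_reverse.mp h1, h2, fun e he hv => h3 e (List.mem_reverse.mpr he) hv⟩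

end LocalWheels

namespace LocalWheels

set_option linter.unusedSectionVars false

variable {V : Type*} [Fintype V] [DecidableEq V] {G : SimpleGraph V}

/-- A cycle has exactly two edges at each vertex of its support. -/
lemma cycle_two_edges {u x : V} {c : G.Walk u u} (hc : c.IsCycle) (hx : x ∈ c.support) :
    ∃ e₁ e₂, e₁ ≠ e₂ ∧ e₁ ∈ c.edges ∧ e₂ ∈ c.edges ∧ x ∈ e₁ ∧ x ∈ e₂ ∧
      ∀ e ∈ c.edges, x ∈ e → e = e₁ ∨ e = e₂ := by
  have hc' := hc.rotate hx
  have hmem : ∀ e, e ∈ (c.rotate x hx).edges ↔ e ∈ c.edges := fun e =>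
    (c.rotate_edges x hx).perm.mem_iff
  suffices h : ∃ e₁ e₂, e₁ ≠ e₂ ∧ e₁ ∈ (c.rotate x hx).edges ∧ e₂ ∈ (c.rotate x hx).edges ∧
      x ∈ e₁ ∧ x ∈ e₂ ∧ ∀ e ∈ (c.rotate x hx).edges, x ∈ e → e = e₁ ∨ e = e₂ by
    obtain ⟨e₁, e₂, h1, h2, h3, h4, h5, h6⟩ := h
    exact ⟨e₁, e₂, h1, (hmem e₁).mp h2, (hmem e₂).mp h3, h4, h5,
      fun e he hxe => h6 e ((hmem e).mpr he) hxe⟩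
  clear hmem
  generalize c.rotate x hx = c' at hc'
  clear hx
  cases c' with
  | nil => exact absurd rfl hc'.ne_nil
  | cons h q =>
    rename_i z
    rw [Walk.cons_isCycle_iff] at hc'
    obtain ⟨hq, hxz⟩ := hc'
    have hqnil : ¬ q.Nil := by
      intro hn
      rw [Walk.nil_iff_length_eq] at hn
      exact G.loopless.irrefl x (Walk.eq_of_length_eq_zero hn ▸ h)
    obtain ⟨e₀, he₀, hxe₀, hu⟩ := exists_unique_end_edge hq hqnil
    refine ⟨s(x, z), e₀, ?_, by simp, by simp [he₀], by simp, hxe₀, ?_⟩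
    · rintro rfl; exact hxz he₀
    · intro e he hxe
      rw [Walk.edges_cons, List.mem_cons] at he
      rcases he with rfl | he
      · exact Or.inl rfl
      · exact Or.inr (hu e he hxe)

/-- If exactly two available edges meet at `x`, a cycle uses both or neither. -/
lemma two_edge_prop {u x : V} {c : G.Walk u u} (hc : c.IsCycle) {E : Set (Sym2 V)}
    (hcE : ∀ e ∈ c.edges, e ∈ E) {e₁ e₂ : Sym2 V} (h12 : e₁ ≠ e₂)
    (hx1 : x ∈ e₁) (hx2 : x ∈ e₂)
    (hcov : ∀ e ∈ E, x ∈ e → e = e₁ ∨ e = e₂) :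
    (e₁ ∈ c.edges ↔ e₂ ∈ c.edges) := by
  have key : ∀ a b : Sym2 V, a ≠ b → x ∈ a → x ∈ b →
      (∀ e ∈ E, x ∈ e → e = a ∨ e = b) → a ∈ c.edges → b ∈ c.edges := by
    intro a b hab hxa hxb hcov' ha
    obtain ⟨f₁, f₂, hf, hf1, hf2, hxf1, hxf2, hcover⟩ :=
      cycle_two_edges hc (mem_support_of_mem_edges ha hxa)
    have h1 : f₁ = a ∨ f₁ = b := hcov' f₁ (hcE f₁ hf1) hxf1
    have h2 : f₂ = a ∨ f₂ = b := hcov' f₂ (hcE f₂ hf2) hxf2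
    rcases h1 with rfl | rfl
    · rcases h2 with rfl | rfl
      · exact absurd rfl hf
      · exact hf2
    · exact hf1
  exact ⟨key e₁ e₂ h12 hx1 hx2 hcov,
    key e₂ e₁ (Ne.symm h12) hx2 hx1 (fun e he hxe => (hcov e he hxe).symm)⟩

/-- If exactly three available edges meet at `x`, a cycle uses zero or two of them. -/
lemma three_edge_prop {u x : V} {c : G.Walk u u} (hc : c.IsCycle) {E : Set (Sym2 V)}
    (hcE : ∀ e ∈ c.edges, e ∈ E) {e₁ e₂ e₃ : Sym2 V}
    (h12 : e₁ ≠ e₂) (h13 : e₁ ≠ e₃) (h23 : e₂ ≠ e₃)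
    (hx1 : x ∈ e₁) (hx2 : x ∈ e₂) (hx3 : x ∈ e₃)
    (hcov : ∀ e ∈ E, x ∈ e → e = e₁ ∨ e = e₂ ∨ e = e₃) :
    ((e₁ ∈ c.edges ↔ e₂ ∈ c.edges) ↔ e₃ ∉ c.edges) := by
  by_cases hx : x ∈ c.support
  · obtain ⟨f₁, f₂, hf, hf1, hf2, hxf1, hxf2, hcover⟩ := cycle_two_edges hc hx
    have mem_iff : ∀ a : Sym2 V, x ∈ a → (a ∈ c.edges ↔ (a = f₁ ∨ a = f₂)) := by
      intro a hxa
      constructor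
      · intro ha; exact hcover a ha hxa
      · rintro (rfl | rfl); exacts [hf1, hf2]
    rw [mem_iff e₁ hx1, mem_iff e₂ hx2, mem_iff e₃ hx3]
    have g1 : f₁ = e₁ ∨ f₁ = e₂ ∨ f₁ = e₃ := hcov f₁ (hcE f₁ hf1) hxf1
    have g2 : f₂ = e₁ ∨ f₂ = e₂ ∨ f₂ = e₃ := hcov f₂ (hcE f₂ hf2) hxf2
    rcases g1 with rfl | rfl | rfl <;> rcases g2 with rfl | rfl | rfl <;>
      simp_all <;> tauto
  · have : ∀ a : Sym2 V, x ∈ a → a ∉ c.edges := fun a hxa ha =>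
      hx (mem_support_of_mem_edges ha hxa)
    simp [this e₁ hx1, this e₂ hx2, this e₃ hx3]

end LocalWheels

namespace LocalWheels

set_option linter.unusedSectionVars false

variable {V : Type*} [Fintype V] [DecidableEq V] {G : SimpleGraph V}

/-- All-or-nothing: if every available edge at an internal vertex of the path `p` is an
edge of `p`, then a cycle contains all edges of `p` or none. -/
lemma all_or_nothing {E : Set (Sym2 V)} {u : V} {c : G.Walk u u} (hc : c.IsCycle)
    (hcE : ∀ e ∈ c.edges, e ∈ E) :
    ∀ {a b : V} (p : G.Walk a b), p.IsPath →
      (∀ x ∈ p.support, x ≠ a → x ≠ b → ∀ e ∈ E, x ∈ e → e ∈ p.edges) →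
      ∀ e ∈ p.edges, ∀ e' ∈ p.edges, (e ∈ c.edges ↔ e' ∈ c.edges) := by
  intro a b p
  induction p with
  | nil => intro _ _ e he; simp at he
  | cons h q ih =>
    rename_i a z b
    intro hp hint e he e' he'
    have haq : a ∉ q.support := by
      have := hp.support_nodup
      rw [Walk.support_cons] at this
      exact (List.nodup_cons.mp this).1
    have hq : q.IsPath := hp.of_cons
    cases q with
    | nil =>
      simp only [Walk.edges_cons, Walk.edges_nil, List.mem_cons, List.not_mem_nil,
        or_false] at he he'
      rw [he, he']
    | cons h' q' =>
      rename_i z₂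
      -- z is internal
      have hzq' : z ∉ q'.support := by
        have := hq.support_nodup
        rw [Walk.support_cons] at this
        exact (List.nodup_cons.mp this).1
      have hza : z ≠ a := fun hh => G.loopless.irrefl a (hh ▸ h)
      have hzb : z ≠ b := by
        intro hh
        subst hh
        exact hzq' q'.end_mem_support
      have h12 : s(a, z) ≠ s(z, z₂) := by
        intro hh
        rw [Sym2.eq_iff] at hh
        rcases hh with ⟨rfl, rfl⟩ | ⟨h1, h2⟩
        · exact G.loopless.irrefl _ h
        · refine haq ?_
          rw [Walk.support_cons]
          exact List.mem_cons_of_mem _ (h1 ▸ q'.start_mem_support)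
      have hcov : ∀ e ∈ E, z ∈ e → e = s(a, z) ∨ e = s(z, z₂) := by
        intro e heE hze
        have := hint z (by simp) hza hzb e heE hze
        rw [Walk.edges_cons, Walk.edges_cons, List.mem_cons, List.mem_cons] at this
        rcases this with rfl | rfl | hq'e
        · exact Or.inl rfl
        · exact Or.inr rfl
        · exact absurd (mem_support_of_mem_edges hq'e hze) hzq'
      have hlink : (s(a, z) ∈ c.edges ↔ s(z, z₂) ∈ c.edges) :=
        two_edge_prop hc hcE h12 (by simp) (by simp) hcov
      -- hint for q
      have hintq : ∀ x ∈ (Walk.cons h' q').support, x ≠ z → x ≠ b →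
          ∀ e ∈ E, x ∈ e → e ∈ (Walk.cons h' q').edges := by
        intro x hx hxz hxb e heE hxe
        have hxa : x ≠ a := fun hh => haq (hh ▸ hx)
        have := hint x (by rw [Walk.support_cons]; exact List.mem_cons_of_mem _ hx)
          hxa hxb e heE hxe
        rw [Walk.edges_cons, List.mem_cons] at this
        rcases this with rfl | hh
        · exfalso
          rw [Sym2.mem_iff] at hxe
          rcases hxe with rfl | rfl
          · exact hxa rfl
          · exact hxz rfl
        · exact hh
      have ihq := ih hq hintq
      -- now combine
      have key : ∀ f ∈ (Walk.cons h (Walk.cons h' q')).edges, (f ∈ c.edges ↔ s(z, z₂) ∈ c.edges) := by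
        intro f hf
        rw [Walk.edges_cons, List.mem_cons] at hf
        rcases hf with rfl | hf
        · exact hlink
        · exact ihq f hf s(z, z₂) (by simp)
      rw [key e he, key e' he']

end LocalWheels

namespace LocalWheels

set_option linter.unusedSectionVars false

variable {V : Type*} [Fintype V] [DecidableEq V] {G : SimpleGraph V}

lemma start_not_mem_support_tail {u v : V} {p : G.Walk u v} (hp : p.IsPath) :
    u ∉ p.support.tail := by
  have h := hp.support_nodup
  rw [p.support_eq_cons] at h
  exact (List.nodup_cons.mp h).1

/-- Appending two paths meeting only at the common endpoint gives a path. -/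
lemma append_isPath {u v w : V} {p : G.Walk u v} {q : G.Walk v w}
    (hp : p.IsPath) (hq : q.IsPath)
    (hsup : ∀ x, x ∈ p.support → x ∈ q.support → x = v) :
    (p.append q).IsPath := by
  rw [Walk.isPath_def, Walk.support_append, List.nodup_append]
  refine ⟨hp.support_nodup, ?_, ?_⟩
  · have := hq.support_nodup
    rw [q.support_eq_cons] at this
    exact (List.nodup_cons.mp this).2
  · intro x hx y hx' hxy
    subst hxy
    have : x = v := hsup x hx (List.mem_of_mem_tail hx')
    subst this
    exact start_not_mem_support_tail hq hx'

lemma path_length_one_of_edge {u v : V} {p : G.Walk u v} (hp : p.IsPath)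
    (he : s(u, v) ∈ p.edges) : p.length = 1 := by
  cases p with
  | nil => simp at he
  | cons h q =>
    rename_i z
    have haq : u ∉ q.support := by
      have := hp.support_nodup
      rw [Walk.support_cons] at this
      exact (List.nodup_cons.mp this).1
    rw [Walk.edges_cons, List.mem_cons] at he
    rcases he with he | he
    · rw [Sym2.eq_iff] at he
      rcases he with ⟨-, rfl⟩ | ⟨rfl, rfl⟩
      · have : q = Walk.nil := IsPath.loop_eq_nil hp.of_cons
        subst this; rfl
      · exact absurd (Walk.start_mem_support q) haq
    · exact absurd (q.fst_mem_support_of_mem_edges he) haq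

/-- A closed walk made of two internally disjoint paths is a cycle. -/
lemma append_isCycle {u v : V} {p : G.Walk u v} {q : G.Walk v u}
    (hp : p.IsPath) (hq : q.IsPath) (huv : u ≠ v)
    (hsup : ∀ x, x ∈ p.support → x ∈ q.support → x = u ∨ x = v)
    (hlen : 3 ≤ p.length + q.length) :
    (p.append q).IsCycle := by
  rw [Walk.isCycle_def]
  refine ⟨⟨?_⟩, ?_, ?_⟩
  · rw [Walk.edges_append, List.nodup_append]
    refine ⟨hp.isTrail.edges_nodup, hq.isTrail.edges_nodup, ?_⟩
    intro e he e' he' hee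
    subst hee
    exfalso
    have hG : e ∈ G.edgeSet := p.edges_subset_edgeSet he
    have heuv : e = s(u, v) := by
      induction e with
      | _ a b =>
        have hab : a ≠ b := (G.ne_of_adj hG)
        have ha : a = u ∨ a = v := hsup a
          (mem_support_of_mem_edges he (by simp)) (mem_support_of_mem_edges he' (by simp))
        have hb : b = u ∨ b = v := hsup b
          (mem_support_of_mem_edges he (by simp)) (mem_support_of_mem_edges he' (by simp))
        rcases ha with rfl | rfl <;> rcases hb with rfl | rfl
        · exact absurd rfl hab
        · rfl
        · exact Sym2.eq_swap
        · exact absurd rfl hab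
    subst heuv
    have h1 : p.length = 1 := path_length_one_of_edge hp he
    have h2 : q.length = 1 := path_length_one_of_edge hq (by rwa [Sym2.eq_swap] at he')
    omega
  · intro hn
    have := congrArg Walk.length hn
    rw [Walk.length_append] at this
    simp only [Walk.length_nil] at this
    omega
  · rw [Walk.support_append, p.support_eq_cons, List.cons_append, List.tail_cons,
      List.nodup_append]
    refine ⟨?_, ?_, ?_⟩
    · have := hp.support_nodup
      rw [p.support_eq_cons] at this
      exact (List.nodup_cons.mp this).2
    · have := hq.support_nodup
      rw [q.support_eq_cons] at this
      exact (List.nodup_cons.mp this).2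
    · intro x hx y hx' hxy
      subst hxy
      rcases hsup x (List.mem_of_mem_tail hx) (List.mem_of_mem_tail hx') with rfl | rfl
      · exact start_not_mem_support_tail hp hx
      · exact start_not_mem_support_tail hq hx'

end LocalWheels

namespace LocalWheels

set_option linter.unusedSectionVars false

variable {V : Type*} [Fintype V] [DecidableEq V] {G : SimpleGraph V}

namespace WheelSubdiv

variable (W : WheelSubdiv G)

lemma npos : 0 < W.n := by have := W.hn; omega

lemma rot_val (i : Fin W.n) : (finRotate W.n i).val = (i.val + 1) % W.n := by
  obtain ⟨m, hm⟩ : ∃ m, W.n = m + 1 := ⟨W.n - 1, by have := W.hn; omega⟩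
  revert i
  rw [hm]
  intro i
  rw [finRotate_succ_apply, Fin.add_def]
  show (i.val + (1 : Fin (m+1)).val) % (m + 1) = _
  have h1 : (1 : Fin (m + 1)).val = 1 % (m + 1) := rfl
  rw [h1]
  conv_lhs => rw [← Nat.mod_eq_of_lt i.isLt]
  rw [← Nat.add_mod]

lemma norot (i : Fin W.n) : finRotate W.n i ≠ i := by
  intro h
  have h2 := W.rot_val i
  rw [h] at h2
  have hi := i.isLt
  have hn := W.hn
  rcases Nat.lt_or_ge (i.val + 1) W.n with hlt | hge
  · rw [Nat.mod_eq_of_lt hlt] at h2; omega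
  · have he : i.val + 1 = W.n := by omega
    rw [he, Nat.mod_self] at h2; omega

lemma no2rot {i j : Fin W.n} (h1 : finRotate W.n i = j) (h2 : finRotate W.n j = i) :
    False := by
  have g1 := W.rot_val i; rw [h1] at g1
  have g2 := W.rot_val j; rw [h2] at g2
  have hi := i.isLt; have hj := j.isLt; have hn := W.hn
  rcases Nat.lt_or_ge (i.val + 1) W.n with ha | ha
  · rw [Nat.mod_eq_of_lt ha] at g1
    rcases Nat.lt_or_ge (j.val + 1) W.n with hb | hb
    · rw [Nat.mod_eq_of_lt hb] at g2; omega
    · have : j.val + 1 = W.n := by omega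
      rw [this, Nat.mod_self] at g2; omega
  · have : i.val + 1 = W.n := by omega
    rw [this, Nat.mod_self] at g1
    rcases Nat.lt_or_ge (j.val + 1) W.n with hb | hb
    · rw [Nat.mod_eq_of_lt hb] at g2; omega
    · have : j.val + 1 = W.n := by omega
      rw [this, Nat.mod_self] at g2; omega

lemma branch_eq_iff {i j : Fin W.n} : W.branch i = W.branch j ↔ i = j :=
  W.branch_inj.eq_iff

lemma spoke_not_nil (i : Fin W.n) : ¬ (W.spoke i).Nil := by
  intro h
  rw [Walk.nil_iff_length_eq] at h
  exact W.center_ne i (Walk.eq_of_length_eq_zero h)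

lemma arc_not_nil (i : Fin W.n) : ¬ (W.arc i).Nil := by
  intro h
  rw [Walk.nil_iff_length_eq] at h
  exact W.norot i (W.branch_inj (Walk.eq_of_length_eq_zero h)).symm

lemma spoke_length_pos (i : Fin W.n) : 0 < (W.spoke i).length :=
  Walk.not_nil_iff_lt_length.mp (W.spoke_not_nil i)

lemma arc_length_pos (i : Fin W.n) : 0 < (W.arc i).length :=
  Walk.not_nil_iff_lt_length.mp (W.arc_not_nil i)

/-- the families of spokes and arcs are pairwise edge-disjoint -/
lemma spoke_spoke_edge {i j : Fin W.n} (hij : i ≠ j) {e : Sym2 V}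
    (hi : e ∈ (W.spoke i).edges) (hj : e ∈ (W.spoke j).edges) : False := by
  have hG := (W.spoke i).edges_subset_edgeSet hi
  induction e with
  | _ a b =>
    have hab : a ≠ b := G.ne_of_adj hG
    have ha : a ∈ ({W.center} : Set V) := by
      rw [← W.spoke_spoke i j hij]
      exact ⟨(W.spoke i).fst_mem_support_of_mem_edges hi,
        (W.spoke j).fst_mem_support_of_mem_edges hj⟩
    have hb : b ∈ ({W.center} : Set V) := by
      rw [← W.spoke_spoke i j hij]
      exact ⟨(W.spoke i).snd_mem_support_of_mem_edges hi,
        (W.spoke j).snd_mem_support_of_mem_edges hj⟩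
    rw [Set.mem_singleton_iff] at ha hb
    exact hab (ha.trans hb.symm)

lemma arc_arc_edge {i j : Fin W.n} (hij : i ≠ j) {e : Sym2 V}
    (hi : e ∈ (W.arc i).edges) (hj : e ∈ (W.arc j).edges) : False := by
  have hG := (W.arc i).edges_subset_edgeSet hi
  induction e with
  | _ a b =>
    have hab : a ≠ b := G.ne_of_adj hG
    have ha : a ∈ ({W.branch i, W.branch (finRotate W.n i)} ∩
        {W.branch j, W.branch (finRotate W.n j)} : Set V) := by
      rw [← W.arc_arc i j hij]
      exact ⟨(W.arc i).fst_mem_support_of_mem_edges hi,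
        (W.arc j).fst_mem_support_of_mem_edges hj⟩
    have hb : b ∈ ({W.branch i, W.branch (finRotate W.n i)} ∩
        {W.branch j, W.branch (finRotate W.n j)} : Set V) := by
      rw [← W.arc_arc i j hij]
      exact ⟨(W.arc i).snd_mem_support_of_mem_edges hi,
        (W.arc j).snd_mem_support_of_mem_edges hj⟩
    simp only [Set.mem_inter_iff, Set.mem_insert_iff, Set.mem_singleton_iff,
      W.branch_eq_iff] at ha hb
    have rinj := (finRotate W.n).injective
    obtain ⟨ha1, ha2⟩ := ha
    obtain ⟨hb1, hb2⟩ := hb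
    rcases ha1 with ha1 | ha1 <;> rcases hb1 with hb1 | hb1
    · exact hab (ha1.trans hb1.symm)
    · rcases ha2 with ha2 | ha2 <;> rcases hb2 with hb2 | hb2
      · exact hij (W.branch_inj (ha1.symm.trans ha2))
      · exact hij (W.branch_inj (ha1.symm.trans ha2))
      · exact W.no2rot (W.branch_inj (hb1.symm.trans hb2))
          (W.branch_inj (ha2.symm.trans ha1))
      · exact hij (rinj (W.branch_inj (hb1.symm.trans hb2)))
    · rcases ha2 with ha2 | ha2 <;> rcases hb2 with hb2 | hb2
      · exact hij (W.branch_inj (hb1.symm.trans hb2))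
      · exact W.no2rot (W.branch_inj (ha1.symm.trans ha2))
          (W.branch_inj (hb2.symm.trans hb1))
      · exact hij (W.branch_inj (hb1.symm.trans hb2))
      · exact hij (rinj (W.branch_inj (ha1.symm.trans ha2)))
    · exact hab (ha1.trans hb1.symm)

lemma spoke_arc_edge {i j : Fin W.n} {e : Sym2 V}
    (hi : e ∈ (W.spoke i).edges) (hj : e ∈ (W.arc j).edges) : False := by
  have hG := (W.spoke i).edges_subset_edgeSet hi
  induction e with
  | _ a b =>
    have hab : a ≠ b := G.ne_of_adj hG
    have ha : a ∈ (({W.center, W.branch i} ∩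
        {W.branch j, W.branch (finRotate W.n j)}) : Set V) := by
      rw [← W.spoke_arc i j]
      exact ⟨(W.spoke i).fst_mem_support_of_mem_edges hi,
        (W.arc j).fst_mem_support_of_mem_edges hj⟩
    have hb : b ∈ (({W.center, W.branch i} ∩
        {W.branch j, W.branch (finRotate W.n j)}) : Set V) := by
      rw [← W.spoke_arc i j]
      exact ⟨(W.spoke i).snd_mem_support_of_mem_edges hi,
        (W.arc j).snd_mem_support_of_mem_edges hj⟩
    simp only [Set.mem_inter_iff, Set.mem_insert_iff, Set.mem_singleton_iff] at ha hb
    obtain ⟨ha1, ha2⟩ := ha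
    obtain ⟨hb1, hb2⟩ := hb
    have hnc : ∀ k : Fin W.n, W.center ≠ W.branch k := W.center_ne
    rcases ha1 with ha1 | ha1
    · rcases ha2 with ha2 | ha2
      · exact hnc j (ha1.symm.trans ha2)
      · exact hnc _ (ha1.symm.trans ha2)
    · rcases hb1 with hb1 | hb1
      · rcases hb2 with hb2 | hb2
        · exact hnc j (hb1.symm.trans hb2)
        · exact hnc _ (hb1.symm.trans hb2)
      · exact hab (ha1.trans hb1.symm)

/-- every edge of the subdivision at an interior vertex of an arc lies on that arc -/
lemma arc_interior_edges {i : Fin W.n} {x : V} (hx : x ∈ (W.arc i).support)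
    (h1 : x ≠ W.branch i) (h2 : x ≠ W.branch (finRotate W.n i)) {e : Sym2 V}
    (he : e ∈ W.edges) (hxe : x ∈ e) : e ∈ (W.arc i).edges := by
  obtain ⟨j, hj | hj⟩ := he
  · exfalso
    have hxs : x ∈ (W.spoke j).support := mem_support_of_mem_edges hj hxe
    have : x ∈ (({W.center, W.branch j} ∩
        {W.branch i, W.branch (finRotate W.n i)}) : Set V) := by
      rw [← W.spoke_arc j i]; exact ⟨hxs, hx⟩
    simp only [Set.mem_inter_iff, Set.mem_insert_iff, Set.mem_singleton_iff] at this
    rcases this.2 with h | h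
    · exact h1 h
    · exact h2 h
  · by_cases hji : j = i
    · exact hji ▸ hj
    · exfalso
      have hxs : x ∈ (W.arc j).support := mem_support_of_mem_edges hj hxe
      have : x ∈ (({W.branch j, W.branch (finRotate W.n j)} ∩
          {W.branch i, W.branch (finRotate W.n i)}) : Set V) := by
        rw [← W.arc_arc j i hji]; exact ⟨hxs, hx⟩
      simp only [Set.mem_inter_iff, Set.mem_insert_iff, Set.mem_singleton_iff] at this
      rcases this.2 with h | h
      · exact h1 h
      · exact h2 h

/-- every edge of the subdivision at an interior vertex of a spoke lies on that spoke -/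
lemma spoke_interior_edges {i : Fin W.n} {x : V} (hx : x ∈ (W.spoke i).support)
    (h1 : x ≠ W.center) (h2 : x ≠ W.branch i) {e : Sym2 V}
    (he : e ∈ W.edges) (hxe : x ∈ e) : e ∈ (W.spoke i).edges := by
  obtain ⟨j, hj | hj⟩ := he
  · by_cases hji : j = i
    · exact hji ▸ hj
    · exfalso
      have hxs : x ∈ (W.spoke j).support := mem_support_of_mem_edges hj hxe
      have : x ∈ ({W.center} : Set V) := by
        rw [← W.spoke_spoke i j (fun h => hji h.symm)]; exact ⟨hx, hxs⟩
      exact h1 this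
  · exfalso
    have hxs : x ∈ (W.arc j).support := mem_support_of_mem_edges hj hxe
    have : x ∈ (({W.center, W.branch i} ∩
        {W.branch j, W.branch (finRotate W.n j)}) : Set V) := by
      rw [← W.spoke_arc i j]; exact ⟨hx, hxs⟩
    simp only [Set.mem_inter_iff, Set.mem_insert_iff, Set.mem_singleton_iff] at this
    rcases this.1 with h | h
    · exact h1 h
    · exact h2 h

/-- the three edges of the subdivision at a branch vertex -/
lemma branch_edges {i k : Fin W.n} (hk : finRotate W.n k = i) :
    ∃ es ea ep : Sym2 V, es ∈ (W.spoke i).edges ∧ ea ∈ (W.arc i).edges ∧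
      ep ∈ (W.arc k).edges ∧
      W.branch i ∈ es ∧ W.branch i ∈ ea ∧ W.branch i ∈ ep ∧
      es ≠ ea ∧ es ≠ ep ∧ ea ≠ ep ∧
      ∀ e ∈ W.edges, W.branch i ∈ e → e = es ∨ e = ea ∨ e = ep := by
  have hik : i ≠ k := by
    intro h
    have h2 := hk
    rw [← h] at h2
    exact W.norot i h2
  obtain ⟨es, hes, hxes, hues⟩ := exists_unique_end_edge (W.spoke_path i) (W.spoke_not_nil i)
  obtain ⟨ea, hea, hxea, huea⟩ := exists_unique_start_edge (W.arc_path i) (W.arc_not_nil i)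
  obtain ⟨ep, hep, hxep, huep⟩ := exists_unique_end_edge (W.arc_path k) (W.arc_not_nil k)
  rw [hk] at hxep
  simp only [hk] at huep
  refine ⟨es, ea, ep, hes, hea, hep, hxes, hxea, hxep, ?_, ?_, ?_, ?_⟩
  · rintro rfl; exact W.spoke_arc_edge hes hea
  · rintro rfl; exact W.spoke_arc_edge hes hep
  · rintro rfl; exact W.arc_arc_edge hik hea hep
  · rintro e ⟨j, hj | hj⟩ hxe
    · -- e on spoke j
      have hxs : W.branch i ∈ (W.spoke j).support := mem_support_of_mem_edges hj hxe
      have : W.branch i ∈ (({W.center, W.branch j} ∩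
          {W.branch i, W.branch (finRotate W.n i)}) : Set V) := by
        rw [← W.spoke_arc j i]
        exact ⟨hxs, (W.arc i).start_mem_support⟩
      simp only [Set.mem_inter_iff, Set.mem_insert_iff, Set.mem_singleton_iff] at this
      rcases this.1 with h | h
      · exact absurd h.symm (W.center_ne i)
      · have hji : j = i := W.branch_inj h.symm
        subst hji
        exact Or.inl (hues e hj hxe)
    · -- e on arc j
      by_cases hji : j = i
      · subst hji
        exact Or.inr (Or.inl (huea e hj hxe))
      by_cases hjk : j = k
      · subst hjk
        exact Or.inr (Or.inr (huep e hj hxe))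
      exfalso
      have hxs : W.branch i ∈ (W.arc j).support := mem_support_of_mem_edges hj hxe
      have : W.branch i ∈ (({W.branch j, W.branch (finRotate W.n j)} ∩
          {W.branch i, W.branch (finRotate W.n i)}) : Set V) := by
        rw [← W.arc_arc j i hji]
        exact ⟨hxs, (W.arc i).start_mem_support⟩
      simp only [Set.mem_inter_iff, Set.mem_insert_iff, Set.mem_singleton_iff] at this
      rcases this.1 with h | h
      · exact hji (W.branch_inj h.symm)
      · exact hjk ((finRotate W.n).injective (by rw [hk]; exact W.branch_inj h.symm))

lemma mem_piece_edges (i : Fin W.n) {e : Sym2 V} :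
    e ∈ (W.piece i).edges ↔ e ∈ (W.spoke i).edges ∨ e ∈ (W.arc i).edges ∨
      e ∈ (W.spoke (finRotate W.n i)).edges := by
  simp [WheelSubdiv.piece, Walk.edges_append, Walk.edges_reverse, List.mem_reverse]

lemma piece_edges_subset (i : Fin W.n) {e : Sym2 V} (he : e ∈ (W.piece i).edges) :
    e ∈ W.edges := by
  rw [W.mem_piece_edges] at he
  rcases he with h | h | h
  · exact ⟨i, Or.inl h⟩
  · exact ⟨i, Or.inr h⟩
  · exact ⟨finRotate W.n i, Or.inl h⟩

lemma piece_isCycle (i : Fin W.n) : (W.piece i).IsCycle := by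
  have hrot : i ≠ finRotate W.n i := fun h => W.norot i h.symm
  have hP : ((W.spoke i).append (W.arc i)).IsPath := by
    refine append_isPath (W.spoke_path i) (W.arc_path i) ?_
    intro x hx hx'
    have : x ∈ (({W.center, W.branch i} ∩
        {W.branch i, W.branch (finRotate W.n i)}) : Set V) := by
      rw [← W.spoke_arc i i]; exact ⟨hx, hx'⟩
    simp only [Set.mem_inter_iff, Set.mem_insert_iff, Set.mem_singleton_iff] at this
    rcases this with ⟨h1 | h1, h2 | h2⟩
    · exact absurd (h1.symm.trans h2) (W.center_ne i)
    · exact absurd (h1.symm.trans h2) (W.center_ne _)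
    · exact h1
    · exact absurd (W.branch_inj (h1.symm.trans h2)).symm hrot.symm
  have hQ : ((W.spoke (finRotate W.n i)).reverse).IsPath := (W.spoke_path _).reverse
  have hcyc : (((W.spoke i).append (W.arc i)).append
      ((W.spoke (finRotate W.n i)).reverse)).IsCycle := by
    refine append_isCycle hP hQ (W.center_ne _) ?_ ?_
    · intro x hx hx'
      rw [Walk.mem_support_append_iff] at hx
      rw [Walk.support_reverse, List.mem_reverse] at hx'
      rcases hx with hx | hx
      · left
        have : x ∈ ({W.center} : Set V) := by
          rw [← W.spoke_spoke i (finRotate W.n i) hrot]; exact ⟨hx, hx'⟩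
        exact this
      · right
        have : x ∈ (({W.center, W.branch (finRotate W.n i)} ∩
            {W.branch i, W.branch (finRotate W.n i)}) : Set V) := by
          rw [← W.spoke_arc (finRotate W.n i) i]; exact ⟨hx', hx⟩
        simp only [Set.mem_inter_iff, Set.mem_insert_iff, Set.mem_singleton_iff] at this
        rcases this with ⟨h1 | h1, h2 | h2⟩
        · exact absurd (h1.symm.trans h2) (W.center_ne i)
        · exact absurd (h1.symm.trans h2) (W.center_ne _)
        · exact absurd (W.branch_inj (h1.symm.trans h2)) hrot.symm
        · exact h1
    · rw [Walk.length_append, Walk.length_reverse]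
      have := W.spoke_length_pos i
      have := W.arc_length_pos i
      have := W.spoke_length_pos (finRotate W.n i)
      omega
  rw [← Walk.append_assoc] at hcyc
  exact hcyc

lemma wlen_append {wt : Sym2 V → ℕ} {u v w : V} (p : G.Walk u v) (q : G.Walk v w) :
    wlen wt (p.append q) = wlen wt p + wlen wt q := by
  simp [wlen, Walk.edges_append]

lemma wlen_copy {wt : Sym2 V → ℕ} {u v u' v' : V} (p : G.Walk u v) (hu : u = u')
    (hv : v = v') : wlen wt (p.copy hu hv) = wlen wt p := by
  simp [wlen, Walk.edges_copy]

def bidx (k : ℕ) : Fin W.n := ⟨k % W.n, Nat.mod_lt _ W.npos⟩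

lemma bidx_val {k : ℕ} (h : k < W.n) : (W.bidx k).val = k := Nat.mod_eq_of_lt h

lemma bidx_self (i : Fin W.n) : W.bidx i.val = i := Fin.ext (W.bidx_val i.isLt)

lemma bidx_rot (k : ℕ) : finRotate W.n (W.bidx k) = W.bidx (k + 1) := by
  apply Fin.ext
  rw [W.rot_val]
  show (k % W.n + 1) % W.n = (k + 1) % W.n
  rw [Nat.mod_add_mod]

lemma bidx_n : W.bidx W.n = W.bidx 0 := by
  apply Fin.ext
  show W.n % W.n = 0 % W.n
  rw [Nat.mod_self, Nat.zero_mod]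

def rimAux (W : WheelSubdiv G) : (k : ℕ) → G.Walk (W.branch (W.bidx 0)) (W.branch (W.bidx k))
  | 0 => Walk.nil
  | k + 1 => (rimAux W k).append
      ((W.arc (W.bidx k)).copy rfl (congrArg W.branch (W.bidx_rot k)))

lemma rimAux_support (k : ℕ) (x : V) :
    x ∈ (rimAux W k).support ↔
      x = W.branch (W.bidx 0) ∨ ∃ j < k, x ∈ (W.arc (W.bidx j)).support := by
  induction k with
  | zero => simp [rimAux]
  | succ k ih =>
    rw [rimAux, Walk.mem_support_append_iff, ih, Walk.support_copy]
    constructor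
    · rintro ((h | ⟨j, hj, h⟩) | h)
      · exact Or.inl h
      · exact Or.inr ⟨j, by omega, h⟩
      · exact Or.inr ⟨k, by omega, h⟩
    · rintro (h | ⟨j, hj, h⟩)
      · exact Or.inl (Or.inl h)
      · rcases Nat.lt_or_ge j k with hh | hh
        · exact Or.inl (Or.inr ⟨j, hh, h⟩)
        · have : j = k := by omega
          subst this
          exact Or.inr h

lemma rimAux_edges (k : ℕ) (e : Sym2 V) :
    e ∈ (rimAux W k).edges ↔ ∃ j < k, e ∈ (W.arc (W.bidx j)).edges := by
  induction k with
  | zero => simp [rimAux]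
  | succ k ih =>
    rw [rimAux, Walk.edges_append, List.mem_append, ih, Walk.edges_copy]
    constructor
    · rintro (⟨j, hj, h⟩ | h)
      · exact ⟨j, by omega, h⟩
      · exact ⟨k, by omega, h⟩
    · rintro ⟨j, hj, h⟩
      rcases Nat.lt_or_ge j k with hh | hh
      · exact Or.inl ⟨j, hh, h⟩
      · have : j = k := by omega
        subst this
        exact Or.inr h

lemma rimAux_length (k : ℕ) : k ≤ (rimAux W k).length := by
  induction k with
  | zero => simp
  | succ k ih =>
    rw [rimAux, Walk.length_append, Walk.length_copy]
    have := W.arc_length_pos (W.bidx k)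
    omega

lemma rimAux_wlen (wt : Sym2 V → ℕ) (k : ℕ) :
    wlen wt (rimAux W k) = ∑ j ∈ Finset.range k, wlen wt (W.arc (W.bidx j)) := by
  induction k with
  | zero => simp [rimAux, wlen]
  | succ k ih =>
    rw [rimAux, wlen_append, wlen_copy, ih, Finset.sum_range_succ]

lemma rimAux_isPath (k : ℕ) (hk : k ≤ W.n - 1) : (rimAux W k).IsPath := by
  induction k with
  | zero => exact Walk.IsPath.nil
  | succ k ih =>
    have hn := W.hn
    have key : ∀ j < k + 1, ∀ x, x ∈ (W.arc (W.bidx j)).support →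
        x ∈ (W.arc (W.bidx k)).support → j < k → x = W.branch (W.bidx k) := by
      intro j hj1 x hxj hxk hjk
      have hne : W.bidx j ≠ W.bidx k := by
        intro h
        have := congrArg Fin.val h
        rw [W.bidx_val (by omega), W.bidx_val (by omega)] at this
        omega
      have : x ∈ (({W.branch (W.bidx j), W.branch (finRotate W.n (W.bidx j))} ∩
          {W.branch (W.bidx k), W.branch (finRotate W.n (W.bidx k))}) : Set V) := by
        rw [← W.arc_arc _ _ hne]; exact ⟨hxj, hxk⟩
      rw [W.bidx_rot, W.bidx_rot] at this
      simp only [Set.mem_inter_iff, Set.mem_insert_iff, Set.mem_singleton_iff] at this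
      obtain ⟨h1, h2⟩ := this
      rcases h1 with h1 | h1 <;> rcases h2 with h2 | h2
      · exfalso
        have := congrArg Fin.val (W.branch_inj (h1.symm.trans h2))
        rw [W.bidx_val (by omega), W.bidx_val (by omega)] at this
        omega
      · exfalso
        have := congrArg Fin.val (W.branch_inj (h1.symm.trans h2))
        rw [W.bidx_val (by omega), W.bidx_val (by omega)] at this
        omega
      · exact h2
      · exfalso
        have := congrArg Fin.val (W.branch_inj (h1.symm.trans h2))
        rw [W.bidx_val (by omega), W.bidx_val (by omega)] at this
        omega
    rw [rimAux]
    refine append_isPath (ih (by omega)) ((Walk.isPath_copy _ _ _).mpr (W.arc_path _)) ?_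
    intro x hx hx'
    rw [Walk.support_copy] at hx'
    rw [rimAux_support] at hx
    rcases hx with hx | ⟨j, hj, hxj⟩
    · rcases Nat.eq_zero_or_pos k with rfl | hkpos
      · exact hx
      · subst hx
        exact key 0 (by omega) _ (by
          have : W.branch (W.bidx 0) ∈ (W.arc (W.bidx 0)).support :=
            (W.arc (W.bidx 0)).start_mem_support
          exact this) hx' hkpos
    · exact key j (by omega) x hxj hx' hj

def rim (W : WheelSubdiv G) : G.Walk (W.branch (W.bidx 0)) (W.branch (W.bidx 0)) :=
  (rimAux W (W.n - 1)).append
    ((W.arc (W.bidx (W.n - 1))).copy rfl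
      (congrArg W.branch (by rw [W.bidx_rot, Nat.sub_add_cancel (by have := W.hn; omega),
        W.bidx_n])))

lemma rim_edges (e : Sym2 V) :
    e ∈ W.rim.edges ↔ ∃ i : Fin W.n, e ∈ (W.arc i).edges := by
  have hn := W.hn
  rw [rim, Walk.edges_append, List.mem_append, Walk.edges_copy, rimAux_edges]
  constructor
  · rintro (⟨j, hj, h⟩ | h)
    · exact ⟨W.bidx j, h⟩
    · exact ⟨W.bidx (W.n - 1), h⟩
  · rintro ⟨i, h⟩
    rcases Nat.lt_or_ge i.val (W.n - 1) with hh | hh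
    · exact Or.inl ⟨i.val, hh, by rw [W.bidx_self]; exact h⟩
    · have : i.val = W.n - 1 := by have := i.isLt; omega
      right
      have h2 : W.bidx (W.n - 1) = i := by rw [← this, W.bidx_self]
      rw [h2]
      exact h

lemma rim_wlen (wt : Sym2 V → ℕ) : wlen wt W.rim = W.rimLen wt := by
  have hn := W.hn
  rw [rim, wlen_append, wlen_copy, rimAux_wlen, ← Finset.sum_range_succ,
    Nat.sub_add_cancel (by omega), WheelSubdiv.rimLen]
  rw [← Fin.sum_univ_eq_sum_range (fun j => wlen wt (W.arc (W.bidx j))) W.n]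
  apply Finset.sum_congr rfl
  intro i _
  rw [W.bidx_self]

lemma rim_isCycle : W.rim.IsCycle := by
  have hn := W.hn
  refine append_isCycle (W.rimAux_isPath _ (le_refl _))
    ((Walk.isPath_copy _ _ _).mpr (W.arc_path _)) ?_ ?_ ?_
  · intro h
    have := congrArg Fin.val (W.branch_inj h)
    rw [W.bidx_val (by omega), W.bidx_val (by omega)] at this
    omega
  · intro x hx hx'
    rw [Walk.support_copy] at hx'
    rw [rimAux_support] at hx
    rcases hx with hx | ⟨j, hj, hxj⟩
    · exact Or.inl hx
    · have hne : W.bidx j ≠ W.bidx (W.n - 1) := by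
        intro h
        have := congrArg Fin.val h
        rw [W.bidx_val (by omega), W.bidx_val (by omega)] at this
        omega
      have hmem : x ∈ (({W.branch (W.bidx j), W.branch (finRotate W.n (W.bidx j))} ∩
          {W.branch (W.bidx (W.n - 1)), W.branch (finRotate W.n (W.bidx (W.n - 1)))}) :
            Set V) := by
        rw [← W.arc_arc _ _ hne]; exact ⟨hxj, hx'⟩
      rw [W.bidx_rot, W.bidx_rot, Nat.sub_add_cancel (by omega), W.bidx_n] at hmem
      simp only [Set.mem_inter_iff, Set.mem_insert_iff, Set.mem_singleton_iff] at hmem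
      obtain ⟨h1, h2⟩ := hmem
      rcases h1 with h1 | h1 <;> rcases h2 with h2 | h2
      · exfalso
        have := congrArg Fin.val (W.branch_inj (h1.symm.trans h2))
        rw [W.bidx_val (by omega), W.bidx_val (by omega)] at this
        omega
      · -- x = branch (bidx j) = branch (bidx 0) → j = 0
        left
        have := congrArg Fin.val (W.branch_inj (h1.symm.trans h2))
        rw [W.bidx_val (by omega), W.bidx_val (by omega)] at this
        rw [h1]
        congr 1
        apply Fin.ext
        rw [W.bidx_val (by omega), W.bidx_val (by omega)]
        omega
      · exact Or.inr h2
      · exfalso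
        have := congrArg Fin.val (W.branch_inj (h1.symm.trans h2))
        rw [W.bidx_val (by omega), W.bidx_val (by omega)] at this
        omega
  · rw [Walk.length_copy]
    have h1 := W.rimAux_length (W.n - 1)
    have h2 := W.arc_length_pos (W.bidx (W.n - 1))
    omega

lemma rim_edges_subset {e : Sym2 V} (he : e ∈ W.rim.edges) : e ∈ W.edges := by
  rw [W.rim_edges] at he
  obtain ⟨i, hi⟩ := he
  exact ⟨i, Or.inr hi⟩

end WheelSubdiv

lemma foldr_toList_map {ι : Type*} [DecidableEq ι] (s : Finset ι)
    (f : ι → Finset (Sym2 V)) (e : Sym2 V) :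
    e ∈ ((s.toList.map f).foldr symmDiff ∅) ↔
      Odd ((s.filter (fun i => e ∈ f i)).card) := by
  rw [mem_foldr_symmDiff, List.countP_map]
  have hc : ((fun s => decide (e ∈ s)) ∘ f) = (fun i => decide (e ∈ f i)) :=
    funext fun i => rfl
  rw [hc, countP_toList]

lemma card_filter_pair {ι : Type*} [DecidableEq ι] (s : Finset ι) {j k : ι} (hjk : j ≠ k) :
    (s.filter (fun i => i = j ∨ i = k)).card =
      (if j ∈ s then 1 else 0) + (if k ∈ s then 1 else 0) := by
  rw [Finset.filter_or, Finset.filter_eq', Finset.filter_eq']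
  by_cases hj : j ∈ s <;> by_cases hk : k ∈ s <;>
      simp only [hj, hk, if_true, if_false]
  · rw [Finset.card_union_of_disjoint (by simp [hjk])]
    simp
  · simp
  · simp
  · simp

end LocalWheels
/-- Every subdivision of a wheel with an `r`-explicit generating set is
`r`-local: its cycles of length at most `r` generate all its cycles. -/
theorem LocalWheels.stmt1 {V : Type*} [Fintype V] [DecidableEq V]
    (G : SimpleGraph V) (wt : Sym2 V → ℕ) (hw : LocalWheels.WeightPos G wt) (r : ℕ∞)
    (W : LocalWheels.WheelSubdiv G) (hexp : W.RExplicit wt r) :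
    W.RLocal wt r := by
  classical
  open LocalWheels LocalWheels.WheelSubdiv in
  intro v c hcyc hcE
  -- arcs and spokes are all-or-nothing for the cycle `c`
  have harc : ∀ (i : Fin W.n), ∀ e ∈ (W.arc i).edges,
      (e ∈ c.edges ↔ ∃ e' ∈ (W.arc i).edges, e' ∈ c.edges) := by
    intro i e he
    constructor
    · exact fun h => ⟨e, he, h⟩
    · rintro ⟨e', he', hce'⟩
      exact (all_or_nothing hcyc hcE (W.arc i) (W.arc_path i)
        (fun x hx h1 h2 e he hxe => W.arc_interior_edges hx h1 h2 he hxe) e he e' he').mpr hce'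
  have hspoke : ∀ (i : Fin W.n), ∀ e ∈ (W.spoke i).edges,
      (e ∈ c.edges ↔ ∃ e' ∈ (W.spoke i).edges, e' ∈ c.edges) := by
    intro i e he
    constructor
    · exact fun h => ⟨e, he, h⟩
    · rintro ⟨e', he', hce'⟩
      exact (all_or_nothing hcyc hcE (W.spoke i) (W.spoke_path i)
        (fun x hx h1 h2 e he hxe => W.spoke_interior_edges hx h1 h2 he hxe) e he e' he').mpr hce'
  -- parity at branch vertices
  have hparity : ∀ i k : Fin W.n, finRotate W.n k = i →
      (((∃ e ∈ (W.arc i).edges, e ∈ c.edges) ↔ (∃ e ∈ (W.arc k).edges, e ∈ c.edges)) ↔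
        ¬ ∃ e ∈ (W.spoke i).edges, e ∈ c.edges) := by
    intro i k hk
    obtain ⟨es, ea, ep, hes, hea, hep, hxes, hxea, hxep, hsa, hsp, hap, hcov⟩ :=
      W.branch_edges hk
    have h3 := three_edge_prop hcyc hcE hap (Ne.symm hsa) (Ne.symm hsp) hxea hxep hxes
      (fun e he hxe => by rcases hcov e he hxe with h | h | h <;> tauto)
    have l1 := harc i ea hea
    have l2 := harc k ep hep
    have l3 := hspoke i es hes
    rw [← l1, ← l2, ← l3]
    exact h3
  set f : Fin W.n → Finset (Sym2 V) := fun i => (W.piece i).edges.toFinset with hf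
  set A : Finset (Fin W.n) :=
    Finset.univ.filter (fun i => ∃ e ∈ (W.arc i).edges, e ∈ c.edges) with hA
  have hmemA : ∀ i, i ∈ A ↔ ∃ e ∈ (W.arc i).edges, e ∈ c.edges := by
    intro i; rw [hA, Finset.mem_filter]; simp
  have hfarc : ∀ {e : Sym2 V} {j : Fin W.n}, e ∈ (W.arc j).edges →
      ∀ i : Fin W.n, (e ∈ f i ↔ i = j) := by
    intro e j he i
    simp only [hf, List.mem_toFinset, W.mem_piece_edges]
    constructor
    · rintro (h | h | h)
      · exact (W.spoke_arc_edge h he).elim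
      · by_contra hij; exact W.arc_arc_edge hij h he
      · exact (W.spoke_arc_edge h he).elim
    · rintro rfl; exact Or.inr (Or.inl he)
  have hfspoke : ∀ {e : Sym2 V} {j k : Fin W.n}, finRotate W.n k = j →
      e ∈ (W.spoke j).edges → ∀ i : Fin W.n, (e ∈ f i ↔ (i = j ∨ i = k)) := by
    intro e j k hk he i
    simp only [hf, List.mem_toFinset, W.mem_piece_edges]
    constructor
    · rintro (h | h | h)
      · left; by_contra hij; exact W.spoke_spoke_edge hij h he
      · exact (W.spoke_arc_edge he h).elim
      · right
        by_contra hik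
        have hne : finRotate W.n i ≠ j := by
          intro hh
          rw [← hk] at hh
          exact hik ((finRotate W.n).injective hh)
        exact W.spoke_spoke_edge hne h he
    · rintro (rfl | rfl)
      · exact Or.inl he
      · right; right; rw [hk]; exact he
  have hsub : ∀ (s : Finset (Fin W.n)) (e : Sym2 V), e ∉ W.edges →
      s.filter (fun i => e ∈ f i) = ∅ := by
    intro s e heW
    apply Finset.filter_false_of_mem
    intro i _ hei
    exact heW (W.piece_edges_subset i (List.mem_toFinset.mp (by simpa [hf] using hei)))
  -- the main counting identity, for an arbitrary index set `s` and offset `rimUsed`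
  have hmain : ∀ (s : Finset (Fin W.n)), (∀ i : Fin W.n,
        (i ∈ s ↔ ∃ e ∈ (W.arc i).edges, e ∈ c.edges) ∨
        (i ∈ s ↔ ¬ ∃ e ∈ (W.arc i).edges, e ∈ c.edges)) → True := fun _ _ => trivial
  clear hmain
  have hcore : ∀ e ∈ c.edges, e ∈ W.edges := hcE
  rcases hexp with hbd | ⟨⟨i₀, hbd⟩, hrim⟩
  · -- all pieces are short
    refine ⟨A.toList.map f, ?_, ?_⟩
    · intro s hs
      rw [List.mem_map] at hs
      obtain ⟨i, _, rfl⟩ := hs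
      exact ⟨W.center, W.piece i, W.piece_isCycle i,
        fun e he => W.piece_edges_subset i he, hbd i, rfl⟩
    · apply Finset.ext
      intro e
      rw [foldr_toList_map, List.mem_toFinset]
      by_cases heW : e ∈ W.edges
      · obtain ⟨j, hj | hj⟩ := heW
        · -- spoke
          obtain ⟨k, hk⟩ : ∃ k, finRotate W.n k = j :=
            ⟨(finRotate W.n).symm j, Equiv.apply_symm_apply _ _⟩
          have hjk : j ≠ k := by
            intro h
            rw [← h] at hk
            exact W.norot j hk
          have hfilter : A.filter (fun i => e ∈ f i) = A.filter (fun i => i = j ∨ i = k) :=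
            Finset.filter_congr (fun i _ => by rw [hfspoke hk hj i])
          rw [hfilter, card_filter_pair _ hjk]
          have hcj : e ∈ c.edges ↔
              ¬ ((∃ e' ∈ (W.arc j).edges, e' ∈ c.edges) ↔
                 (∃ e' ∈ (W.arc k).edges, e' ∈ c.edges)) := by
            rw [hspoke j e hj]
            exact iff_not_comm.mp (hparity j k hk)
          by_cases h1 : ∃ e' ∈ (W.arc j).edges, e' ∈ c.edges <;>
            by_cases h2 : ∃ e' ∈ (W.arc k).edges, e' ∈ c.edges <;>
            simp [hmemA j, hmemA k, h1, h2, hcj, Nat.odd_iff]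
        · -- arc
          have hfilter : A.filter (fun i => e ∈ f i) = A.filter (fun i => i = j) :=
            Finset.filter_congr (fun i _ => by rw [hfarc hj i])
          rw [hfilter, Finset.filter_eq']
          have hcj := harc j e hj
          by_cases h1 : ∃ e' ∈ (W.arc j).edges, e' ∈ c.edges <;>
            simp [hmemA j, h1, hcj, Nat.odd_iff]
      · rw [hsub A e heW]
        simp only [Finset.card_empty, Nat.odd_iff]
        simp only [Nat.zero_mod, zero_ne_one, false_iff]
        exact fun h => heW (hcE e h)
  · by_cases hA0 : ∃ e ∈ (W.arc i₀).edges, e ∈ c.edges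
    · -- the exceptional piece is used: replace it using the rim
      refine ⟨W.rim.edges.toFinset :: ((Finset.univ \ A).toList.map f), ?_, ?_⟩
      · intro s hs
        rw [List.mem_cons] at hs
        rcases hs with rfl | hs
        · exact ⟨_, W.rim, W.rim_isCycle, fun e he => W.rim_edges_subset he,
            by rw [W.rim_wlen]; exact hrim, rfl⟩
        · rw [List.mem_map] at hs
          obtain ⟨i, hi, rfl⟩ := hs
          have hi0 : i ≠ i₀ := by
            intro h
            subst h
            rw [Finset.mem_toList, Finset.mem_sdiff] at hi
            exact hi.2 ((hmemA i).mpr hA0)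
          exact ⟨W.center, W.piece i, W.piece_isCycle i,
            fun e he => W.piece_edges_subset i he, hbd i hi0, rfl⟩
      · rw [List.foldr_cons]
        apply Finset.ext
        intro e
        rw [Finset.mem_symmDiff, foldr_toList_map, List.mem_toFinset, List.mem_toFinset]
        have hmemB : ∀ i : Fin W.n, i ∈ Finset.univ \ A ↔
            ¬ ∃ e' ∈ (W.arc i).edges, e' ∈ c.edges := by
          intro i
          rw [Finset.mem_sdiff, hmemA i]
          simp
        by_cases heW : e ∈ W.edges
        · obtain ⟨j, hj | hj⟩ := heW
          · -- spoke
            obtain ⟨k, hk⟩ : ∃ k, finRotate W.n k = j :=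
              ⟨(finRotate W.n).symm j, Equiv.apply_symm_apply _ _⟩
            have hjk : j ≠ k := by
              intro h
              rw [← h] at hk
              exact W.norot j hk
            have hrimF : e ∉ W.rim.edges := by
              intro h
              rw [W.rim_edges] at h
              obtain ⟨i, hi⟩ := h
              exact W.spoke_arc_edge hj hi
            have hfilter : (Finset.univ \ A).filter (fun i => e ∈ f i) =
                (Finset.univ \ A).filter (fun i => i = j ∨ i = k) :=
              Finset.filter_congr (fun i _ => by rw [hfspoke hk hj i])
            rw [hfilter, card_filter_pair _ hjk]
            have hcj : e ∈ c.edges ↔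
                ¬ ((∃ e' ∈ (W.arc j).edges, e' ∈ c.edges) ↔
                   (∃ e' ∈ (W.arc k).edges, e' ∈ c.edges)) := by
              rw [hspoke j e hj]
              exact iff_not_comm.mp (hparity j k hk)
            by_cases h1 : ∃ e' ∈ (W.arc j).edges, e' ∈ c.edges <;>
              by_cases h2 : ∃ e' ∈ (W.arc k).edges, e' ∈ c.edges <;>
              simp [hmemB j, hmemB k, h1, h2, hcj, hrimF, Nat.odd_iff]
          · -- arc
            have hrimF : e ∈ W.rim.edges := by
              rw [W.rim_edges]; exact ⟨j, hj⟩
            have hfilter : (Finset.univ \ A).filter (fun i => e ∈ f i) =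
                (Finset.univ \ A).filter (fun i => i = j) :=
              Finset.filter_congr (fun i _ => by rw [hfarc hj i])
            rw [hfilter, Finset.filter_eq']
            have hcj := harc j e hj
            by_cases h1 : ∃ e' ∈ (W.arc j).edges, e' ∈ c.edges <;>
              simp [hmemB j, h1, hcj, hrimF, Nat.odd_iff]
        · have hrimF : e ∉ W.rim.edges := fun h => heW (W.rim_edges_subset h)
          rw [hsub _ e heW]
          simp only [Finset.card_empty, Nat.odd_iff, Nat.zero_mod, zero_ne_one]
          constructor
          · rintro (⟨h, -⟩ | ⟨h, -⟩)
            · exact absurd h hrimF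
            · exact absurd h (by simp)
          · intro h
            exact absurd (hcE e h) heW
    · -- the exceptional piece is not used
      refine ⟨A.toList.map f, ?_, ?_⟩
      · intro s hs
        rw [List.mem_map] at hs
        obtain ⟨i, hi, rfl⟩ := hs
        have hi0 : i ≠ i₀ := by
          intro h
          subst h
          exact hA0 ((hmemA i).mp (Finset.mem_toList.mp hi))
        exact ⟨W.center, W.piece i, W.piece_isCycle i,
          fun e he => W.piece_edges_subset i he, hbd i hi0, rfl⟩
      · apply Finset.ext
        intro e
        rw [foldr_toList_map, List.mem_toFinset]
        by_cases heW : e ∈ W.edges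
        · obtain ⟨j, hj | hj⟩ := heW
          · obtain ⟨k, hk⟩ : ∃ k, finRotate W.n k = j :=
              ⟨(finRotate W.n).symm j, Equiv.apply_symm_apply _ _⟩
            have hjk : j ≠ k := by
              intro h
              rw [← h] at hk
              exact W.norot j hk
            have hfilter : A.filter (fun i => e ∈ f i) = A.filter (fun i => i = j ∨ i = k) :=
              Finset.filter_congr (fun i _ => by rw [hfspoke hk hj i])
            rw [hfilter, card_filter_pair _ hjk]
            have hcj : e ∈ c.edges ↔
                ¬ ((∃ e' ∈ (W.arc j).edges, e' ∈ c.edges) ↔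
                   (∃ e' ∈ (W.arc k).edges, e' ∈ c.edges)) := by
              rw [hspoke j e hj]
              exact iff_not_comm.mp (hparity j k hk)
            by_cases h1 : ∃ e' ∈ (W.arc j).edges, e' ∈ c.edges <;>
              by_cases h2 : ∃ e' ∈ (W.arc k).edges, e' ∈ c.edges <;>
              simp [hmemA j, hmemA k, h1, h2, hcj, Nat.odd_iff]
          · have hfilter : A.filter (fun i => e ∈ f i) = A.filter (fun i => i = j) :=
              Finset.filter_congr (fun i _ => by rw [hfarc hj i])
            rw [hfilter, Finset.filter_eq']
            have hcj := harc j e hj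
            by_cases h1 : ∃ e' ∈ (W.arc j).edges, e' ∈ c.edges <;>
              simp [hmemA j, h1, hcj, Nat.odd_iff]
        · rw [hsub A e heW]
          simp only [Finset.card_empty, Nat.odd_iff]
          simp only [Nat.zero_mod, zero_ne_one, false_iff]
          exact fun h => heW (hcE e h)
end

section
/- Every subdivision of a wheel with an r-explicit generating set contains, as a subgraph, a subdivision of a wheel that is r-bounded. -/
/-!
Common definitions: weighted graphs, weighted lengths of walks, 𝔽₂-generation of cycles,
subdivisions of wheels (with pieces and rim), theta graphs, the classes 𝒲 and 𝒲*,
fans and pre-fans, arcs/bridges/detours of a cycle relative to a theta graph.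
-/

open SimpleGraph

set_option linter.unusedSectionVars false
set_option linter.unusedVariables false
namespace LocalWheels

open SimpleGraph
open Fin.NatCast
open Fin.CommRing

variable {V : Type*} [Fintype V] [DecidableEq V] {G : SimpleGraph V}

private lemma wlen_append {wt : Sym2 V → ℕ} {u v w : V} (p : G.Walk u v) (q : G.Walk v w) :
    wlen wt (p.append q) = wlen wt p + wlen wt q := by
  simp [wlen, Walk.edges_append]

private lemma wlen_reverse {wt : Sym2 V → ℕ} {u v : V} (p : G.Walk u v) :
    wlen wt p.reverse = wlen wt p := by
  simp [wlen, Walk.edges_reverse, List.sum_reverse]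

private lemma wlen_copy {wt : Sym2 V → ℕ} {u v u' v' : V} (p : G.Walk u v)
    (hu : u = u') (hv : v = v') : wlen wt (p.copy hu hv) = wlen wt p := by
  simp [wlen, Walk.edges_copy]

private lemma isPath_append {u v w : V} {p : G.Walk u v} {q : G.Walk v w}
    (hp : p.IsPath) (hq : q.IsPath) (h : ∀ x, x ∈ p.support → x ∈ q.support → x = v) :
    (p.append q).IsPath := by
  rw [Walk.isPath_def, Walk.support_append, List.nodup_append]
  refine ⟨hp.support_nodup, ?_, ?_⟩
  · have := hq.support_nodup
    rw [q.support_eq_cons] at this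
    exact this.of_cons
  · intro x hx y hx' hxy
    subst hxy
    have hxs : x ∈ q.support := by
      rw [q.support_eq_cons]; exact List.mem_cons_of_mem _ hx'
    have hxv := h x hx hxs
    subst hxv
    have := hq.support_nodup
    rw [q.support_eq_cons] at this
    exact (List.nodup_cons.mp this).1 hx'

private lemma natCast_fin_inj {n a b : ℕ} [NeZero n] (ha : a < n) (hb : b < n)
    (h : (a : Fin n) = (b : Fin n)) : a = b := by
  have := congrArg Fin.val h
  rwa [Fin.val_natCast, Fin.val_natCast, Nat.mod_eq_of_lt ha, Nat.mod_eq_of_lt hb] at this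

private lemma finRotate_eq' {n : ℕ} [NeZero n] (i : Fin n) : finRotate n i = i + 1 := by
  cases n with
  | zero => exact i.elim0
  | succ m => exact finRotate_succ_apply i

namespace WheelSubdivAux

variable (W : WheelSubdiv G)

instance : NeZero W.n := ⟨by have := W.hn; omega⟩

private lemma idx_inj {s t : ℕ} (hs : s < W.n) (ht : t < W.n) {i : Fin W.n}
    (h : i + (s : Fin W.n) = i + (t : Fin W.n)) : s = t :=
  natCast_fin_inj hs ht (add_left_cancel h)

private lemma badd_ne {s t : ℕ} (hs : s < W.n) (ht : t < W.n) (hst : s ≠ t) (i : Fin W.n) :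
    W.branch (i + (s : Fin W.n)) ≠ W.branch (i + (t : Fin W.n)) := fun h =>
  hst (idx_inj W hs ht (W.branch_inj h))

private lemma idx_succ (i : Fin W.n) (t : ℕ) :
    i + ((t + 1 : ℕ) : Fin W.n) = (i + 1) + (t : Fin W.n) := by push_cast; ring

private lemma idx_zero (i : Fin W.n) : i + ((0 : ℕ) : Fin W.n) = i := by simp

private lemma mem_SA {i k : Fin W.n} {x : V} (h1 : x ∈ (W.spoke i).support)
    (h2 : x ∈ (W.arc k).support) :
    (x = W.center ∨ x = W.branch i) ∧ (x = W.branch k ∨ x = W.branch (k + 1)) := by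
  have hx : x ∈ (({W.center, W.branch i} : Set V) ∩
      {W.branch k, W.branch (finRotate W.n k)}) := by
    rw [← W.spoke_arc i k]
    exact ⟨h1, h2⟩
  rw [finRotate_eq'] at hx
  simpa using hx

private lemma mem_AA {i k : Fin W.n} {x : V} (hik : i ≠ k) (h1 : x ∈ (W.arc i).support)
    (h2 : x ∈ (W.arc k).support) :
    (x = W.branch i ∨ x = W.branch (i + 1)) ∧ (x = W.branch k ∨ x = W.branch (k + 1)) := by
  have hx : x ∈ (({W.branch i, W.branch (finRotate W.n i)} : Set V) ∩
      {W.branch k, W.branch (finRotate W.n k)}) := by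
    rw [← W.arc_arc i k hik]
    exact ⟨h1, h2⟩
  rw [finRotate_eq', finRotate_eq'] at hx
  simpa using hx

private lemma mem_SS {i k : Fin W.n} {x : V} (hik : i ≠ k) (h1 : x ∈ (W.spoke i).support)
    (h2 : x ∈ (W.spoke k).support) : x = W.center := by
  have hx : x ∈ ({W.center} : Set V) := by
    rw [← W.spoke_spoke i k hik]
    exact ⟨h1, h2⟩
  simpa using hx

private lemma center_mem_spoke (i : Fin W.n) : W.center ∈ (W.spoke i).support :=
  (W.spoke i).start_mem_support

private lemma branch_mem_spoke (i : Fin W.n) : W.branch i ∈ (W.spoke i).support :=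
  (W.spoke i).end_mem_support

private lemma branch_mem_arc (i : Fin W.n) : W.branch i ∈ (W.arc i).support :=
  (W.arc i).start_mem_support

private lemma branch_succ_mem_arc (i : Fin W.n) : W.branch (i + 1) ∈ (W.arc i).support := by
  rw [show (i + 1 : Fin W.n) = finRotate W.n i from (finRotate_eq' i).symm]
  exact (W.arc i).end_mem_support

private lemma center_not_mem_arc (k : Fin W.n) : W.center ∉ (W.arc k).support := by
  intro h
  rcases (mem_SA W (center_mem_spoke W k) h).2 with h' | h' <;> exact W.center_ne _ h'

private lemma branch_mem_spoke_iff {l i : Fin W.n} (h : W.branch l ∈ (W.spoke i).support) :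
    l = i := by
  by_contra hne
  exact W.center_ne l (mem_SS W hne (branch_mem_spoke W l) h).symm

private lemma branch_mem_arc_cases {l k : Fin W.n} (h : W.branch l ∈ (W.arc k).support) :
    l = k ∨ l = k + 1 := by
  rcases (mem_SA W (branch_mem_spoke W l) h).2 with h' | h'
  · exact Or.inl (W.branch_inj h')
  · exact Or.inr (W.branch_inj h')

private def arcc (i : Fin W.n) : G.Walk (W.branch i) (W.branch (i + 1)) :=
  (W.arc i).copy rfl (congrArg W.branch (finRotate_eq' i))

@[simp] private lemma arcc_support (i : Fin W.n) : (arcc W i).support = (W.arc i).support := by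
  simp [arcc]

@[simp] private lemma arcc_edges (i : Fin W.n) : (arcc W i).edges = (W.arc i).edges := by
  simp [arcc]

private def rpath : (m : ℕ) → (i : Fin W.n) → G.Walk (W.branch i) (W.branch (i + (m : Fin W.n)))
  | 0, i => Walk.nil.copy rfl (by simp)
  | m + 1, i => ((arcc W i).append (rpath m (i + 1))).copy rfl
      (congrArg W.branch (by push_cast; ring))

private lemma mem_support_rpath : ∀ (m : ℕ) (i : Fin W.n) (x : V),
    x ∈ (rpath W m i).support ↔
      (x = W.branch (i + (m : Fin W.n)) ∨ ∃ t < m, x ∈ (W.arc (i + (t : Fin W.n))).support)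
  | 0, i, x => by
    simp [rpath]
  | m + 1, i, x => by
    rw [rpath]
    simp only [Walk.support_copy]
    rw [Walk.mem_support_append_iff]
    have harc : (x ∈ (arcc W i).support) ↔ x ∈ (W.arc i).support := by rw [arcc_support]
    rw [harc, mem_support_rpath m (i + 1) x]
    constructor
    · rintro (h | h | ⟨t, ht, h⟩)
      · refine Or.inr ⟨0, Nat.succ_pos m, ?_⟩
        rwa [idx_zero]
      · left
        rw [h, idx_succ]
      · refine Or.inr ⟨t + 1, by omega, ?_⟩
        rwa [idx_succ]
    · rintro (h | ⟨t, ht, h⟩)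
      · right; left
        rw [h, idx_succ]
      · rcases Nat.eq_zero_or_pos t with rfl | htpos
        · left
          rwa [idx_zero] at h
        · obtain ⟨s, rfl⟩ : ∃ s, t = s + 1 := ⟨t - 1, by omega⟩
          refine Or.inr (Or.inr ⟨s, by omega, ?_⟩)
          rwa [idx_succ] at h

private lemma mem_edges_rpath : ∀ (m : ℕ) (i : Fin W.n) (e : Sym2 V),
    e ∈ (rpath W m i).edges ↔ ∃ t < m, e ∈ (W.arc (i + (t : Fin W.n))).edges
  | 0, i, e => by
    simp [rpath]
  | m + 1, i, e => by
    rw [rpath]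
    simp only [Walk.edges_copy]
    rw [Walk.edges_append, List.mem_append]
    have harc : (e ∈ (arcc W i).edges) ↔ e ∈ (W.arc i).edges := by rw [arcc_edges]
    rw [harc, mem_edges_rpath m (i + 1) e]
    constructor
    · rintro (h | ⟨t, ht, h⟩)
      · refine ⟨0, Nat.succ_pos m, ?_⟩
        rwa [idx_zero]
      · refine ⟨t + 1, by omega, ?_⟩
        rwa [idx_succ]
    · rintro ⟨t, ht, h⟩
      rcases Nat.eq_zero_or_pos t with rfl | htpos
      · left
        rwa [idx_zero] at h
      · obtain ⟨s, rfl⟩ : ∃ s, t = s + 1 := ⟨t - 1, by omega⟩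
        refine Or.inr ⟨s, by omega, ?_⟩
        rwa [idx_succ] at h

private lemma wlen_rpath (wt : Sym2 V → ℕ) : ∀ (m : ℕ) (i : Fin W.n),
    wlen wt (rpath W m i) = ∑ t ∈ Finset.range m, wlen wt (W.arc (i + (t : Fin W.n)))
  | 0, i => by
    simp [rpath, wlen]
  | m + 1, i => by
    rw [rpath, wlen_copy, wlen_append, wlen_rpath wt m (i + 1), Finset.sum_range_succ', add_comm]
    congr 1
    · refine Finset.sum_congr rfl fun t _ => ?_
      rw [idx_succ]
    · rw [idx_zero]
      simp only [arcc, Walk.edges_copy, wlen]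

private lemma rpath_isPath : ∀ (m : ℕ), m < W.n → ∀ i : Fin W.n, (rpath W m i).IsPath
  | 0, _, i => by
    simp only [rpath, Walk.isPath_copy]
    exact Walk.IsPath.nil
  | m + 1, hm, i => by
    rw [rpath, Walk.isPath_copy]
    refine isPath_append ?_ (rpath_isPath m (by omega) (i + 1)) ?_
    · simpa [arcc] using W.arc_path i
    · intro x hx hx'
      rw [arcc_support] at hx
      rw [mem_support_rpath] at hx'
      rcases hx' with h | ⟨t, ht, h⟩
      · subst h
        rcases branch_mem_arc_cases W hx with h' | h'
        · exfalso
          rw [← idx_succ] at h'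
          nth_rewrite 2 [← idx_zero W i] at h'
          have := idx_inj W (by omega) (by omega) h'
          omega
        · exact congrArg W.branch h'
      · have hne : i ≠ i + 1 + (t : Fin W.n) := by
          rw [← idx_succ]
          nth_rewrite 1 [← idx_zero W i]
          intro he
          have := idx_inj W (by omega) (by omega) he
          omega
        obtain ⟨h1, h2⟩ := mem_AA W hne hx h
        have e2 : i + 1 + (t : Fin W.n) + 1 = i + ((t+2 : ℕ) : Fin W.n) := by push_cast; ring
        have e1 : i + 1 + (t : Fin W.n) = i + ((t+1 : ℕ) : Fin W.n) := (idx_succ W i t).symm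
        rw [e2] at h2
        rw [e1] at h2
        rcases h1 with h1 | h1
        · exfalso
          rcases h2 with h2 | h2 <;>
          · rw [h1] at h2
            nth_rewrite 1 [← idx_zero W i] at h2
            have := idx_inj W (by omega) (by omega) (W.branch_inj h2)
            omega
        · exact h1

section RotJ

variable (j : Fin W.n)

private lemma idxF4 : j + ((W.n - 1 : ℕ) : Fin W.n) + 1 = j := by
  have h3 := W.hn
  have h : ((W.n - 1 : ℕ) : Fin W.n) + 1 = ((W.n - 1 + 1 : ℕ) : Fin W.n) := by push_cast; ring
  rw [add_assoc, h, show W.n - 1 + 1 = W.n by omega, Fin.natCast_self, add_zero]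

private lemma idxF5 : (j + 1) + ((W.n - 2 : ℕ) : Fin W.n) = j + ((W.n - 1 : ℕ) : Fin W.n) := by
  have h3 := W.hn
  rw [show (W.n - 1 : ℕ) = (W.n - 2) + 1 by omega, idx_succ]

private lemma ne_bj_bj1 : W.branch j ≠ W.branch (j + 1) := by
  have h3 := W.hn
  have h := badd_ne W (s := 0) (t := 1) (by omega) (by omega) (by omega) j
  simpa using h

private lemma ne_bj_bj' : W.branch j ≠ W.branch (j + ((W.n - 1 : ℕ) : Fin W.n)) := by
  have h3 := W.hn
  have h := badd_ne W (s := 0) (t := W.n - 1) (by omega) (by omega) (by omega) j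
  simpa using h

private lemma ne_bj1_bj' : W.branch (j + 1) ≠ W.branch (j + ((W.n - 1 : ℕ) : Fin W.n)) := by
  have h3 := W.hn
  have h := badd_ne W (s := 1) (t := W.n - 1) (by omega) (by omega) (by omega) j
  simpa using h

private lemma ne_idx_j_j1 : j ≠ j + 1 := fun h => ne_bj_bj1 W j (congrArg W.branch h)
private lemma ne_idx_j_j' : j ≠ j + ((W.n - 1 : ℕ) : Fin W.n) :=
  fun h => ne_bj_bj' W j (congrArg W.branch h)
private lemma ne_idx_j1_j' : j + 1 ≠ j + ((W.n - 1 : ℕ) : Fin W.n) :=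
  fun h => ne_bj1_bj' W j (congrArg W.branch h)

private lemma bj'_succ_mem_arc :
    W.branch j ∈ (W.arc (j + ((W.n - 1 : ℕ) : Fin W.n))).support := by
  have h := branch_succ_mem_arc W (j + ((W.n - 1 : ℕ) : Fin W.n))
  rwa [idxF4 W j] at h

private def sp0 : G.Walk (W.branch j) (W.branch (j + 1)) := arcc W j
private def sp1 : G.Walk (W.branch j) W.center := (W.spoke j).reverse
private def sp2 : G.Walk (W.branch j) (W.branch (j + ((W.n - 1 : ℕ) : Fin W.n))) :=
  ((arcc W (j + ((W.n - 1 : ℕ) : Fin W.n))).copy rfl (congrArg W.branch (idxF4 W j))).reverse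
private def ar0 : G.Walk (W.branch (j + 1)) W.center := (W.spoke (j + 1)).reverse
private def ar1 : G.Walk W.center (W.branch (j + ((W.n - 1 : ℕ) : Fin W.n))) :=
  W.spoke (j + ((W.n - 1 : ℕ) : Fin W.n))
private def ar2 :
    G.Walk (W.branch (j + ((W.n - 1 : ℕ) : Fin W.n))) (W.branch (j + 1)) :=
  ((rpath W (W.n - 2) (j + 1)).copy rfl (congrArg W.branch (idxF5 W j))).reverse

private lemma mem_sp0 {x : V} : x ∈ (sp0 W j).support ↔ x ∈ (W.arc j).support := by
  simp [sp0]
private lemma mem_sp1 {x : V} : x ∈ (sp1 W j).support ↔ x ∈ (W.spoke j).support := by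
  simp [sp1]
private lemma mem_sp2 {x : V} : x ∈ (sp2 W j).support ↔
    x ∈ (W.arc (j + ((W.n - 1 : ℕ) : Fin W.n))).support := by
  simp [sp2]
private lemma mem_ar0 {x : V} : x ∈ (ar0 W j).support ↔ x ∈ (W.spoke (j + 1)).support := by
  simp [ar0]
private lemma mem_ar1 {x : V} : x ∈ (ar1 W j).support ↔
    x ∈ (W.spoke (j + ((W.n - 1 : ℕ) : Fin W.n))).support := Iff.rfl
private lemma mem_ar2 {x : V} : x ∈ (ar2 W j).support ↔
    x ∈ (rpath W (W.n - 2) (j + 1)).support := by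
  simp [ar2]

private lemma mem_R_iff {x : V} : x ∈ (rpath W (W.n - 2) (j + 1)).support ↔
    (x = W.branch (j + ((W.n - 1 : ℕ) : Fin W.n)) ∨
      ∃ t < W.n - 2, x ∈ (W.arc (j + 1 + (t : Fin W.n))).support) := by
  rw [mem_support_rpath, idxF5]

private lemma bj1_mem_R : W.branch (j + 1) ∈ (rpath W (W.n - 2) (j + 1)).support :=
  (rpath W (W.n - 2) (j + 1)).start_mem_support

private lemma bj'_mem_R :
    W.branch (j + ((W.n - 1 : ℕ) : Fin W.n)) ∈ (rpath W (W.n - 2) (j + 1)).support := by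
  rw [mem_R_iff]
  exact Or.inl rfl

private lemma arc_shift_branch {s t : ℕ} (hs : s < W.n) (ht : t < W.n - 2)
    (h : W.branch (j + (s : Fin W.n)) ∈ (W.arc (j + 1 + (t : Fin W.n))).support) :
    s = t + 1 ∨ s = t + 2 := by
  have h3 := W.hn
  rcases branch_mem_arc_cases W h with h' | h'
  · left
    rw [← idx_succ] at h'
    exact idx_inj W hs (by omega) h'
  · right
    rw [show j + 1 + (t : Fin W.n) + 1 = j + ((t + 2 : ℕ) : Fin W.n) by push_cast; ring] at h'
    exact idx_inj W hs (by omega) h'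

private lemma bj_arc_shift {t : ℕ} (ht : t < W.n - 2)
    (h : W.branch j ∈ (W.arc (j + 1 + (t : Fin W.n))).support) : False := by
  have h3 := W.hn
  have h' : W.branch (j + ((0:ℕ) : Fin W.n)) ∈ (W.arc (j + 1 + (t : Fin W.n))).support := by
    rwa [idx_zero]
  rcases arc_shift_branch W j (by omega) ht h' with h'' | h'' <;> omega

private lemma bj1_idx : j + 1 = j + ((1:ℕ) : Fin W.n) := by norm_num

private lemma bj1_arc_shift {t : ℕ} (ht : t < W.n - 2)
    (h : W.branch (j + 1) ∈ (W.arc (j + 1 + (t : Fin W.n))).support) : t = 0 := by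
  have h3 := W.hn
  rw [bj1_idx] at h
  rcases arc_shift_branch W j (by omega) ht h with h'' | h'' <;> omega

private lemma bj'_arc_shift {t : ℕ} (ht : t < W.n - 2)
    (h : W.branch (j + ((W.n - 1 : ℕ) : Fin W.n)) ∈
      (W.arc (j + 1 + (t : Fin W.n))).support) : t = W.n - 3 := by
  have h3 := W.hn
  rcases arc_shift_branch W j (by omega) ht h with h'' | h'' <;> omega

private lemma Lss01 :
    {x | x ∈ (sp0 W j).support} ∩ {x | x ∈ (sp1 W j).support} = {W.branch j} := by
  ext x
  simp only [Set.mem_inter_iff, Set.mem_setOf_eq, Set.mem_singleton_iff, mem_sp0, mem_sp1]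
  constructor
  · rintro ⟨h1, h2⟩
    rcases (mem_SA W h2 h1).1 with h | h
    · exact absurd (h ▸ h1) (center_not_mem_arc W j)
    · exact h
  · rintro rfl
    exact ⟨branch_mem_arc W j, branch_mem_spoke W j⟩

private lemma Lss02 :
    {x | x ∈ (sp0 W j).support} ∩ {x | x ∈ (sp2 W j).support} = {W.branch j} := by
  ext x
  simp only [Set.mem_inter_iff, Set.mem_setOf_eq, Set.mem_singleton_iff, mem_sp0, mem_sp2]
  constructor
  · rintro ⟨h1, h2⟩
    obtain ⟨hA, hB⟩ := mem_AA W (ne_idx_j_j' W j) h1 h2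
    rw [idxF4 W j] at hB
    rcases hA with h | h
    · exact h
    · exfalso
      rcases hB with h' | h'
      · exact ne_bj1_bj' W j (h.symm.trans h')
      · exact ne_bj_bj1 W j ((h.symm.trans h').symm)
  · rintro rfl
    exact ⟨branch_mem_arc W j, bj'_succ_mem_arc W j⟩

private lemma Lss12 :
    {x | x ∈ (sp1 W j).support} ∩ {x | x ∈ (sp2 W j).support} = {W.branch j} := by
  ext x
  simp only [Set.mem_inter_iff, Set.mem_setOf_eq, Set.mem_singleton_iff, mem_sp1, mem_sp2]
  constructor
  · rintro ⟨h1, h2⟩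
    obtain ⟨hA, hB⟩ := mem_SA W h1 h2
    rw [idxF4 W j] at hB
    rcases hA with h | h
    · exfalso
      rcases hB with h' | h'
      · exact W.center_ne _ (h.symm.trans h')
      · exact W.center_ne _ (h.symm.trans h')
    · exact h
  · rintro rfl
    exact ⟨branch_mem_spoke W j, bj'_succ_mem_arc W j⟩

private lemma Laa01 :
    {x | x ∈ (ar0 W j).support} ∩ {x | x ∈ (ar1 W j).support} =
      (({W.branch (j + 1), W.center} : Set V) ∩
        {W.center, W.branch (j + ((W.n - 1 : ℕ) : Fin W.n))}) := by
  ext x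
  simp only [Set.mem_inter_iff, Set.mem_setOf_eq, Set.mem_insert_iff, Set.mem_singleton_iff,
    mem_ar0, mem_ar1]
  constructor
  · rintro ⟨h1, h2⟩
    have hx := mem_SS W (ne_idx_j1_j' W j) h1 h2
    exact ⟨Or.inr hx, Or.inl hx⟩
  · rintro ⟨hA, hB⟩
    rcases hA with h | h
    · exfalso
      rcases hB with h' | h'
      · exact W.center_ne _ ((h.symm.trans h').symm)
      · exact ne_bj1_bj' W j (h.symm.trans h')
    · subst h
      exact ⟨center_mem_spoke W _, center_mem_spoke W _⟩

private lemma Laa02 :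
    {x | x ∈ (ar0 W j).support} ∩ {x | x ∈ (ar2 W j).support} =
      (({W.branch (j + 1), W.center} : Set V) ∩
        {W.branch (j + ((W.n - 1 : ℕ) : Fin W.n)), W.branch (j + 1)}) := by
  ext x
  simp only [Set.mem_inter_iff, Set.mem_setOf_eq, Set.mem_insert_iff, Set.mem_singleton_iff,
    mem_ar0, mem_ar2]
  constructor
  · rintro ⟨h1, h2⟩
    rw [mem_R_iff] at h2
    rcases h2 with h2 | ⟨t, ht, h2⟩
    · exfalso
      subst h2
      exact ne_bj1_bj' W j (congrArg W.branch (branch_mem_spoke_iff W h1)).symm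
    · rcases (mem_SA W h1 h2).1 with h | h
      · exact absurd (h ▸ h2) (center_not_mem_arc W _)
      · exact ⟨Or.inl h, Or.inr h⟩
  · rintro ⟨hA, hB⟩
    have hx : x = W.branch (j + 1) := by
      rcases hB with h | h
      · exfalso
        rcases hA with h' | h'
        · exact ne_bj1_bj' W j (h'.symm.trans h)
        · exact W.center_ne _ (h'.symm.trans h)
      · exact h
    subst hx
    exact ⟨branch_mem_spoke W _, bj1_mem_R W j⟩

private lemma Laa12 :
    {x | x ∈ (ar1 W j).support} ∩ {x | x ∈ (ar2 W j).support} =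
      (({W.center, W.branch (j + ((W.n - 1 : ℕ) : Fin W.n))} : Set V) ∩
        {W.branch (j + ((W.n - 1 : ℕ) : Fin W.n)), W.branch (j + 1)}) := by
  ext x
  simp only [Set.mem_inter_iff, Set.mem_setOf_eq, Set.mem_insert_iff, Set.mem_singleton_iff,
    mem_ar1, mem_ar2]
  constructor
  · rintro ⟨h1, h2⟩
    rw [mem_R_iff] at h2
    rcases h2 with h2 | ⟨t, ht, h2⟩
    · exact ⟨Or.inr h2, Or.inl h2⟩
    · rcases (mem_SA W h1 h2).1 with h | h
      · exact absurd (h ▸ h2) (center_not_mem_arc W _)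
      · exact ⟨Or.inr h, Or.inl h⟩
  · rintro ⟨hA, hB⟩
    have hx : x = W.branch (j + ((W.n - 1 : ℕ) : Fin W.n)) := by
      rcases hA with h | h
      · exfalso
        rcases hB with h' | h'
        · exact W.center_ne _ (h.symm.trans h')
        · exact W.center_ne _ (h.symm.trans h')
      · exact h
    subst hx
    exact ⟨branch_mem_spoke W _, bj'_mem_R W j⟩

private lemma Lsa00 :
    {x | x ∈ (sp0 W j).support} ∩ {x | x ∈ (ar0 W j).support} =
      (({W.branch j, W.branch (j + 1)} : Set V) ∩ {W.branch (j + 1), W.center}) := by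
  ext x
  simp only [Set.mem_inter_iff, Set.mem_setOf_eq, Set.mem_insert_iff, Set.mem_singleton_iff,
    mem_sp0, mem_ar0]
  constructor
  · rintro ⟨h1, h2⟩
    rcases (mem_SA W h2 h1).1 with h | h
    · exact absurd (h ▸ h1) (center_not_mem_arc W _)
    · exact ⟨Or.inr h, Or.inl h⟩
  · rintro ⟨hA, hB⟩
    have hx : x = W.branch (j + 1) := by
      rcases hB with h | h
      · exact h
      · exfalso
        rcases hA with h' | h'
        · exact W.center_ne _ (h.symm.trans h')
        · exact W.center_ne _ (h.symm.trans h')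
    subst hx
    exact ⟨branch_succ_mem_arc W j, branch_mem_spoke W _⟩

private lemma Lsa01 :
    {x | x ∈ (sp0 W j).support} ∩ {x | x ∈ (ar1 W j).support} =
      (({W.branch j, W.branch (j + 1)} : Set V) ∩
        {W.center, W.branch (j + ((W.n - 1 : ℕ) : Fin W.n))}) := by
  ext x
  simp only [Set.mem_inter_iff, Set.mem_setOf_eq, Set.mem_insert_iff, Set.mem_singleton_iff,
    mem_sp0, mem_ar1]
  constructor
  · rintro ⟨h1, h2⟩
    exfalso
    rcases (mem_SA W h2 h1).1 with h | h
    · exact absurd (h ▸ h1) (center_not_mem_arc W _)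
    · subst h
      rcases (mem_SA W h2 h1).2 with h | h
      · exact ne_bj_bj' W j h.symm
      · exact ne_bj1_bj' W j h.symm
  · rintro ⟨hA, hB⟩
    exfalso
    rcases hA with h | h <;> rcases hB with h' | h'
    · exact W.center_ne _ (h'.symm.trans h)
    · exact ne_bj_bj' W j (h.symm.trans h')
    · exact W.center_ne _ (h'.symm.trans h)
    · exact ne_bj1_bj' W j (h.symm.trans h')

private lemma Lsa02 :
    {x | x ∈ (sp0 W j).support} ∩ {x | x ∈ (ar2 W j).support} =
      (({W.branch j, W.branch (j + 1)} : Set V) ∩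
        {W.branch (j + ((W.n - 1 : ℕ) : Fin W.n)), W.branch (j + 1)}) := by
  ext x
  simp only [Set.mem_inter_iff, Set.mem_setOf_eq, Set.mem_insert_iff, Set.mem_singleton_iff,
    mem_sp0, mem_ar2]
  constructor
  · rintro ⟨h1, h2⟩
    rw [mem_R_iff] at h2
    rcases h2 with h2 | ⟨t, ht, h2⟩
    · exfalso
      subst h2
      rcases branch_mem_arc_cases W h1 with h | h
      · exact ne_idx_j_j' W j h.symm
      · exact ne_idx_j1_j' W j h.symm
    · have hne : j ≠ j + 1 + (t : Fin W.n) := by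
        have h3 := W.hn
        rw [← idx_succ]
        nth_rewrite 1 [← idx_zero W j]
        intro he
        have := idx_inj W (by omega) (by omega) he
        omega
      rcases (mem_AA W hne h1 h2).1 with h | h
      · exact absurd (h ▸ h2) (fun hc => bj_arc_shift W j ht hc)
      · exact ⟨Or.inr h, Or.inr h⟩
  · rintro ⟨hA, hB⟩
    have hx : x = W.branch (j + 1) := by
      rcases hB with h | h
      · exfalso
        rcases hA with h' | h'
        · exact ne_bj_bj' W j (h'.symm.trans h)
        · exact ne_bj1_bj' W j (h'.symm.trans h)
      · exact h
    subst hx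
    exact ⟨branch_succ_mem_arc W j, bj1_mem_R W j⟩

private lemma Lsa10 :
    {x | x ∈ (sp1 W j).support} ∩ {x | x ∈ (ar0 W j).support} =
      (({W.branch j, W.center} : Set V) ∩ {W.branch (j + 1), W.center}) := by
  ext x
  simp only [Set.mem_inter_iff, Set.mem_setOf_eq, Set.mem_insert_iff, Set.mem_singleton_iff,
    mem_sp1, mem_ar0]
  constructor
  · rintro ⟨h1, h2⟩
    have hx := mem_SS W (ne_idx_j_j1 W j) h1 h2
    exact ⟨Or.inr hx, Or.inr hx⟩
  · rintro ⟨hA, hB⟩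
    have hx : x = W.center := by
      rcases hA with h | h
      · exfalso
        rcases hB with h' | h'
        · exact ne_bj_bj1 W j (h.symm.trans h')
        · exact W.center_ne _ (h'.symm.trans h)
      · exact h
    subst hx
    exact ⟨center_mem_spoke W _, center_mem_spoke W _⟩

private lemma Lsa11 :
    {x | x ∈ (sp1 W j).support} ∩ {x | x ∈ (ar1 W j).support} =
      (({W.branch j, W.center} : Set V) ∩
        {W.center, W.branch (j + ((W.n - 1 : ℕ) : Fin W.n))}) := by
  ext x
  simp only [Set.mem_inter_iff, Set.mem_setOf_eq, Set.mem_insert_iff, Set.mem_singleton_iff,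
    mem_sp1, mem_ar1]
  constructor
  · rintro ⟨h1, h2⟩
    have hx := mem_SS W (ne_idx_j_j' W j) h1 h2
    exact ⟨Or.inr hx, Or.inl hx⟩
  · rintro ⟨hA, hB⟩
    have hx : x = W.center := by
      rcases hA with h | h
      · exfalso
        rcases hB with h' | h'
        · exact W.center_ne _ (h'.symm.trans h)
        · exact ne_bj_bj' W j (h.symm.trans h')
      · exact h
    subst hx
    exact ⟨center_mem_spoke W _, center_mem_spoke W _⟩

private lemma Lsa12 :
    {x | x ∈ (sp1 W j).support} ∩ {x | x ∈ (ar2 W j).support} =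
      (({W.branch j, W.center} : Set V) ∩
        {W.branch (j + ((W.n - 1 : ℕ) : Fin W.n)), W.branch (j + 1)}) := by
  ext x
  simp only [Set.mem_inter_iff, Set.mem_setOf_eq, Set.mem_insert_iff, Set.mem_singleton_iff,
    mem_sp1, mem_ar2]
  constructor
  · rintro ⟨h1, h2⟩
    exfalso
    rw [mem_R_iff] at h2
    rcases h2 with h2 | ⟨t, ht, h2⟩
    · subst h2
      exact ne_idx_j_j' W j (branch_mem_spoke_iff W h1).symm
    · rcases (mem_SA W h1 h2).1 with h | h
      · exact absurd (h ▸ h2) (center_not_mem_arc W _)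
      · exact bj_arc_shift W j ht (h ▸ h2)
  · rintro ⟨hA, hB⟩
    exfalso
    rcases hA with h | h <;> rcases hB with h' | h'
    · exact ne_bj_bj' W j (h.symm.trans h')
    · exact ne_bj_bj1 W j (h.symm.trans h')
    · exact W.center_ne _ (h.symm.trans h')
    · exact W.center_ne _ (h.symm.trans h')

private lemma Lsa20 :
    {x | x ∈ (sp2 W j).support} ∩ {x | x ∈ (ar0 W j).support} =
      (({W.branch j, W.branch (j + ((W.n - 1 : ℕ) : Fin W.n))} : Set V) ∩
        {W.branch (j + 1), W.center}) := by
  ext x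
  simp only [Set.mem_inter_iff, Set.mem_setOf_eq, Set.mem_insert_iff, Set.mem_singleton_iff,
    mem_sp2, mem_ar0]
  constructor
  · rintro ⟨h1, h2⟩
    exfalso
    rcases (mem_SA W h2 h1).1 with h | h
    · exact absurd (h ▸ h1) (center_not_mem_arc W _)
    · subst h
      have hB := (mem_SA W h2 h1).2
      rw [idxF4 W j] at hB
      rcases hB with h | h
      · exact ne_bj1_bj' W j h
      · exact ne_bj_bj1 W j h.symm
  · rintro ⟨hA, hB⟩
    exfalso
    rcases hA with h | h <;> rcases hB with h' | h'
    · exact ne_bj_bj1 W j (h.symm.trans h')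
    · exact W.center_ne _ (h'.symm.trans h)
    · exact ne_bj1_bj' W j ((h.symm.trans h').symm)
    · exact W.center_ne _ (h'.symm.trans h)

private lemma Lsa21 :
    {x | x ∈ (sp2 W j).support} ∩ {x | x ∈ (ar1 W j).support} =
      (({W.branch j, W.branch (j + ((W.n - 1 : ℕ) : Fin W.n))} : Set V) ∩
        {W.center, W.branch (j + ((W.n - 1 : ℕ) : Fin W.n))}) := by
  ext x
  simp only [Set.mem_inter_iff, Set.mem_setOf_eq, Set.mem_insert_iff, Set.mem_singleton_iff,
    mem_sp2, mem_ar1]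
  constructor
  · rintro ⟨h1, h2⟩
    rcases (mem_SA W h2 h1).1 with h | h
    · exact absurd (h ▸ h1) (center_not_mem_arc W _)
    · exact ⟨Or.inr h, Or.inr h⟩
  · rintro ⟨hA, hB⟩
    have hx : x = W.branch (j + ((W.n - 1 : ℕ) : Fin W.n)) := by
      rcases hB with h | h
      · exfalso
        rcases hA with h' | h'
        · exact W.center_ne _ (h.symm.trans h')
        · exact W.center_ne _ (h.symm.trans h')
      · exact h
    subst hx
    exact ⟨branch_mem_arc W _, branch_mem_spoke W _⟩

private lemma Lsa22 :
    {x | x ∈ (sp2 W j).support} ∩ {x | x ∈ (ar2 W j).support} =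
      (({W.branch j, W.branch (j + ((W.n - 1 : ℕ) : Fin W.n))} : Set V) ∩
        {W.branch (j + ((W.n - 1 : ℕ) : Fin W.n)), W.branch (j + 1)}) := by
  ext x
  simp only [Set.mem_inter_iff, Set.mem_setOf_eq, Set.mem_insert_iff, Set.mem_singleton_iff,
    mem_sp2, mem_ar2]
  constructor
  · rintro ⟨h1, h2⟩
    rw [mem_R_iff] at h2
    rcases h2 with h2 | ⟨t, ht, h2⟩
    · exact ⟨Or.inr h2, Or.inl h2⟩
    · have hne : j + ((W.n - 1 : ℕ) : Fin W.n) ≠ j + 1 + (t : Fin W.n) := by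
        have h3 := W.hn
        rw [← idx_succ]
        intro he
        have := idx_inj W (by omega) (by omega) he
        omega
      rcases (mem_AA W hne h1 h2).1 with h | h
      · exact ⟨Or.inr h, Or.inl h⟩
      · exfalso
        rw [idxF4 W j] at h
        exact bj_arc_shift W j ht (h ▸ h2)
  · rintro ⟨hA, hB⟩
    have hx : x = W.branch (j + ((W.n - 1 : ℕ) : Fin W.n)) := by
      rcases hB with h | h
      · exact h
      · exfalso
        rcases hA with h' | h'
        · exact ne_bj_bj1 W j (h'.symm.trans h)
        · exact ne_bj1_bj' W j (h.symm.trans h')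
    subst hx
    exact ⟨branch_mem_arc W _, bj'_mem_R W j⟩

private def rotW : WheelSubdiv G where
  n := 3
  hn := le_refl 3
  center := W.branch j
  branch := fun i => match i with
    | ⟨0, _⟩ => W.branch (j + 1)
    | ⟨1, _⟩ => W.center
    | ⟨2, _⟩ => W.branch (j + ((W.n - 1 : ℕ) : Fin W.n))
  branch_inj := by
    intro a b h
    fin_cases a <;> fin_cases b <;>
      first
        | rfl
        | exact absurd h ((W.center_ne (j + 1)).symm)
        | exact absurd h (W.center_ne (j + 1))
        | exact absurd h (ne_bj1_bj' W j)
        | exact absurd h (ne_bj1_bj' W j).symm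
        | exact absurd h (W.center_ne _)
        | exact absurd h (W.center_ne _).symm
  center_ne := by
    intro i
    fin_cases i
    · exact ne_bj_bj1 W j
    · exact fun h => W.center_ne j h.symm
    · exact ne_bj_bj' W j
  spoke := fun i => match i with
    | ⟨0, _⟩ => sp0 W j
    | ⟨1, _⟩ => sp1 W j
    | ⟨2, _⟩ => sp2 W j
  arc := fun i => match i with
    | ⟨0, _⟩ => ar0 W j
    | ⟨1, _⟩ => ar1 W j
    | ⟨2, _⟩ => ar2 W j
  spoke_path := by
    intro i
    fin_cases i
    · show (sp0 W j).IsPath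
      simp only [sp0, arcc, Walk.isPath_copy]
      exact W.arc_path j
    · exact (W.spoke_path j).reverse
    · show (sp2 W j).IsPath
      apply Walk.IsPath.reverse
      rw [Walk.isPath_copy]
      simp only [arcc, Walk.isPath_copy]
      exact W.arc_path _
  arc_path := by
    intro i
    fin_cases i
    · exact (W.spoke_path (j + 1)).reverse
    · exact W.spoke_path _
    · show (ar2 W j).IsPath
      apply Walk.IsPath.reverse
      rw [Walk.isPath_copy]
      exact rpath_isPath W (W.n - 2) (by have := W.hn; omega) (j + 1)
  spoke_spoke := by
    intro a b hab
    fin_cases a <;> fin_cases b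
    · exact absurd rfl hab
    · exact Lss01 W j
    · exact Lss02 W j
    · exact (Set.inter_comm _ _).trans (Lss01 W j)
    · exact absurd rfl hab
    · exact Lss12 W j
    · exact (Set.inter_comm _ _).trans (Lss02 W j)
    · exact (Set.inter_comm _ _).trans (Lss12 W j)
    · exact absurd rfl hab
  arc_arc := by
    intro a b hab
    fin_cases a <;> fin_cases b
    · exact absurd rfl hab
    · exact Laa01 W j
    · exact Laa02 W j
    · exact (Set.inter_comm _ _).trans ((Laa01 W j).trans (Set.inter_comm _ _))
    · exact absurd rfl hab
    · exact Laa12 W j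
    · exact (Set.inter_comm _ _).trans ((Laa02 W j).trans (Set.inter_comm _ _))
    · exact (Set.inter_comm _ _).trans ((Laa12 W j).trans (Set.inter_comm _ _))
    · exact absurd rfl hab
  spoke_arc := by
    intro a b
    fin_cases a <;> fin_cases b
    · exact Lsa00 W j
    · exact Lsa01 W j
    · exact Lsa02 W j
    · exact Lsa10 W j
    · exact Lsa11 W j
    · exact Lsa12 W j
    · exact Lsa20 W j
    · exact Lsa21 W j
    · exact Lsa22 W j

private lemma rot_pl0 (wt : Sym2 V → ℕ) (h : 0 < 3) :
    (rotW W j).pieceLen wt ⟨0, h⟩ = W.pieceLen wt j := by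
  show wlen wt ((sp0 W j).append ((ar0 W j).append (sp1 W j).reverse)) =
    wlen wt ((W.spoke j).append ((W.arc j).append (W.spoke (finRotate W.n j)).reverse))
  rw [wlen_append, wlen_append, wlen_reverse, wlen_append, wlen_append, wlen_reverse]
  have h1 : wlen wt (W.spoke (finRotate W.n j)) = wlen wt (W.spoke (j + 1)) :=
    congrArg (fun k => wlen wt (W.spoke k)) (finRotate_eq' j)
  rw [h1]
  simp only [sp0, sp1, ar0, arcc, wlen_copy, wlen_reverse]
  ring

private lemma rot_pl1 (wt : Sym2 V → ℕ) (h : 1 < 3) :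
    (rotW W j).pieceLen wt ⟨1, h⟩ = W.pieceLen wt (j + ((W.n - 1 : ℕ) : Fin W.n)) := by
  show wlen wt ((sp1 W j).append ((ar1 W j).append (sp2 W j).reverse)) =
    wlen wt ((W.spoke (j + ((W.n - 1 : ℕ) : Fin W.n))).append
      ((W.arc (j + ((W.n - 1 : ℕ) : Fin W.n))).append
        (W.spoke (finRotate W.n (j + ((W.n - 1 : ℕ) : Fin W.n)))).reverse))
  rw [wlen_append, wlen_append, wlen_reverse, wlen_append, wlen_append, wlen_reverse]
  have h1 : wlen wt (W.spoke (finRotate W.n (j + ((W.n - 1 : ℕ) : Fin W.n)))) =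
      wlen wt (W.spoke j) :=
    congrArg (fun k => wlen wt (W.spoke k)) ((finRotate_eq' _).trans (idxF4 W j))
  rw [h1]
  simp only [sp1, sp2, ar1, arcc, wlen_copy, wlen_reverse]
  ring

private lemma rot_pl2 (wt : Sym2 V → ℕ) (h : 2 < 3) :
    (rotW W j).pieceLen wt ⟨2, h⟩ = W.rimLen wt := by
  show wlen wt ((sp2 W j).append ((ar2 W j).append (sp0 W j).reverse)) =
    ∑ i, wlen wt (W.arc i)
  have h3 := W.hn
  rw [wlen_append, wlen_append, wlen_reverse]
  have e0 : wlen wt (sp0 W j) = wlen wt (W.arc j) := by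
    simp only [sp0, arcc, wlen_copy]
  have e2 : wlen wt (sp2 W j) = wlen wt (W.arc (j + ((W.n - 1 : ℕ) : Fin W.n))) := by
    simp only [sp2, arcc, wlen_copy, wlen_reverse]
  have eR : wlen wt (ar2 W j) =
      ∑ t ∈ Finset.range (W.n - 2), wlen wt (W.arc ((j + 1) + (t : Fin W.n))) := by
    simp only [ar2, wlen_copy, wlen_reverse]
    exact wlen_rpath W wt (W.n - 2) (j + 1)
  rw [e0, e2, eR]
  have key : ∑ i : Fin W.n, wlen wt (W.arc i) =
      ∑ t ∈ Finset.range W.n, wlen wt (W.arc (j + (t : Fin W.n))) := by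
    have e1 : ∑ i : Fin W.n, wlen wt (W.arc i) = ∑ i : Fin W.n, wlen wt (W.arc (j + i)) :=
      (Fintype.sum_equiv (Equiv.addLeft j) (fun i => wlen wt (W.arc (j + i)))
        (fun i => wlen wt (W.arc i)) (fun i => rfl)).symm
    have e2' : ∑ i : Fin W.n, wlen wt (W.arc (j + i)) =
        ∑ t ∈ Finset.range W.n, wlen wt (W.arc (j + (t : Fin W.n))) := by
      rw [← Fin.sum_univ_eq_sum_range (fun t => wlen wt (W.arc (j + (t : Fin W.n)))) W.n]
      exact Finset.sum_congr rfl fun i _ => by rw [Fin.cast_val_eq_self]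
    exact e1.trans e2'
  rw [key]
  have hr1 : Finset.range W.n = Finset.range ((W.n - 1) + 1) := by
    rw [Nat.sub_add_cancel (by omega)]
  rw [hr1, Finset.sum_range_succ]
  have hr2 : Finset.range (W.n - 1) = Finset.range ((W.n - 2) + 1) := by
    congr 1
    omega
  rw [hr2, Finset.sum_range_succ']
  have hcong : ∑ t ∈ Finset.range (W.n - 2), wlen wt (W.arc (j + ((t + 1 : ℕ) : Fin W.n))) =
      ∑ t ∈ Finset.range (W.n - 2), wlen wt (W.arc ((j + 1) + (t : Fin W.n))) :=
    Finset.sum_congr rfl fun t _ => by rw [idx_succ]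
  rw [hcong, idx_zero]
  ring

private lemma rot_edges_subset : (rotW W j).edges ⊆ W.edges := by
  rintro e ⟨i, hi⟩
  fin_cases i <;> rcases hi with he | he
  · have he' : e ∈ (sp0 W j).edges := he
    exact ⟨j, Or.inr (by simpa [sp0] using he')⟩
  · have he' : e ∈ (ar0 W j).edges := he
    exact ⟨j + 1, Or.inl (by simpa [ar0] using he')⟩
  · have he' : e ∈ (sp1 W j).edges := he
    exact ⟨j, Or.inl (by simpa [sp1] using he')⟩
  · have he' : e ∈ (ar1 W j).edges := he
    exact ⟨j + ((W.n - 1 : ℕ) : Fin W.n), Or.inl he'⟩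
  · have he' : e ∈ (sp2 W j).edges := he
    exact ⟨j + ((W.n - 1 : ℕ) : Fin W.n), Or.inr (by simpa [sp2] using he')⟩
  · have he0 : e ∈ (ar2 W j).edges := he
    have he' : e ∈ (rpath W (W.n - 2) (j + 1)).edges := by
      simpa [ar2] using he0
    rw [mem_edges_rpath] at he'
    obtain ⟨t, ht, he''⟩ := he'
    exact ⟨j + 1 + (t : Fin W.n), Or.inr he''⟩

end RotJ
end WheelSubdivAux

end LocalWheels

/-- Every subdivision of a wheel with an `r`-explicit generating set
contains, as a subgraph, a subdivision of a wheel that is `r`-bounded. -/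
theorem LocalWheels.stmt2 {V : Type*} [Fintype V] [DecidableEq V]
    (G : SimpleGraph V) (wt : Sym2 V → ℕ) (hw : LocalWheels.WeightPos G wt) (r : ℕ∞)
    (W : LocalWheels.WheelSubdiv G) (hexp : W.RExplicit wt r) :
    ∃ W' : LocalWheels.WheelSubdiv G, W'.edges ⊆ W.edges ∧ W'.RBounded wt r := by
  rcases hexp with hall | ⟨⟨i₀, hi₀⟩, hrim⟩
  · exact ⟨W, subset_rfl, hall⟩
  · obtain ⟨j, hj⟩ : ∃ j : Fin W.n, j ∉ ({i₀, i₀ + 1} : Finset (Fin W.n)) := by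
      by_contra hc
      push_neg at hc
      have hsub : (Finset.univ : Finset (Fin W.n)) ⊆ {i₀, i₀ + 1} := fun x _ => hc x
      have hle := Finset.card_le_card hsub
      rw [Finset.card_univ, Fintype.card_fin] at hle
      have h2 : ({i₀, i₀ + 1} : Finset (Fin W.n)).card ≤ 2 :=
        le_trans (Finset.card_insert_le _ _) (by simp)
      have := W.hn
      omega
    simp only [Finset.mem_insert, Finset.mem_singleton, not_or] at hj
    obtain ⟨hj1, hj2⟩ := hj
    refine ⟨LocalWheels.WheelSubdivAux.rotW W j,
      LocalWheels.WheelSubdivAux.rot_edges_subset W j, ?_⟩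
    intro i
    fin_cases i
    · erw [LocalWheels.WheelSubdivAux.rot_pl0]
      exact hi₀ j hj1
    · erw [LocalWheels.WheelSubdivAux.rot_pl1]
      refine hi₀ _ fun he => hj2 ?_
      rw [← he, LocalWheels.WheelSubdivAux.idxF4]
    · erw [LocalWheels.WheelSubdivAux.rot_pl2]
      exact hrim
end
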